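/- arXiv:1303.7305 — 6 statements merged into one kernel-verified Lean document; each statement's English description precedes it below -/
import Mathlib

section
/- Let X ⊆ ℓ^∞ be a compact connected set, x ∈ X, r > 0 and c > 0. If X ∩ B(x,r) has a c-antenna, then β'_X(x,r) ≥ c/14. -/
open Metric Set MeasureTheory

noncomputable section

/-- `ℓ^∞`, the Banach space of bounded real sequences with the sup norm. -/
abbrev lInf : Type := lp (fun _ : ℕ => ℝ) ⊤

/-- The set of values whose infimum defines `β'_X(x,r)`: for each rectifiable curve
`s : [0,1] → B(x,r)` with `s 0 ≠ s 1`, the quantity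
`(ℓ(s) − |s(0)−s(1)| + sup_{z ∈ X ∩ B(x,r)} dist(z, s([0,1]))) / |s(0)−s(1)|`. -/
def betaPrimeSet {E : Type*} [NormedAddCommGroup E] (X : Set E) (x : E) (r : ℝ) : Set ℝ :=
  { b | ∃ s : ℝ → E, ContinuousOn s (Set.Icc 0 1) ∧
      (∀ t ∈ Set.Icc (0:ℝ) 1, s t ∈ Metric.ball x r) ∧
      s 0 ≠ s 1 ∧ eVariationOn s (Set.Icc 0 1) ≠ ⊤ ∧
      b = ((eVariationOn s (Set.Icc 0 1)).toReal - dist (s 0) (s 1)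
          + ⨆ z ∈ X ∩ Metric.ball x r, Metric.infDist z (s '' Set.Icc 0 1)) / dist (s 0) (s 1) }

/-- `β'_X(x,r)`. -/
def betaPrime {E : Type*} [NormedAddCommGroup E] (X : Set E) (x : E) (r : ℝ) : ℝ :=
  sInf (betaPrimeSet X x r)

def stdVec (i : Fin 3) : EuclideanSpace ℝ (Fin 3) := EuclideanSpace.single i 1

/-- The antenna template `Y = [0,e₁] ∪ [0,e₂] ∪ [0,e₃] ⊆ ℝ³`. -/
def antennaY : Set (EuclideanSpace ℝ (Fin 3)) := ⋃ i : Fin 3, segment ℝ 0 (stdVec i)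

/-- The tip `e_i` of the antenna, as a point of `Y`. -/
def eY (i : Fin 3) : antennaY := ⟨stdVec i, Set.mem_iUnion.2 ⟨i, right_mem_segment ℝ 0 (stdVec i)⟩⟩

/-- The points of `Y` lying on the two arms `[0,e_j] ∪ [0,e_k]`. -/
def armPair (j k : Fin 3) : Set antennaY :=
  {p | (p : EuclideanSpace ℝ (Fin 3)) ∈ segment ℝ 0 (stdVec j) ∪ segment ℝ 0 (stdVec k)}

/-- The ball `B_X(x,r)` has a `c`-antenna: there is a topological embedding `h` of `Y` into `X`
with image inside `B_X(x,r)` such that `dist(h(e_i), h([0,e_j] ∪ [0,e_k])) ≥ c·r` for every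
permutation `(i,j,k)` of `(1,2,3)`. -/
def HasAntenna {E : Type*} [MetricSpace E] (x : E) (r c : ℝ) : Prop :=
  ∃ h : antennaY → E, Topology.IsEmbedding h ∧ (∀ p, h p ∈ Metric.ball x r) ∧
    ∀ i j k : Fin 3, i ≠ j → j ≠ k → i ≠ k →
      c * r ≤ Metric.infDist (h (eY i)) (h '' armPair j k)

/-- `X ∩ B(x,r)` has a `c`-antenna, for a subset `X` of an ambient metric space. -/
def HasAntennaIn {E : Type*} [MetricSpace E] (X : Set E) (x : E) (r c : ℝ) : Prop :=
  ∃ h : antennaY → E, Topology.IsEmbedding h ∧ (∀ p, h p ∈ X ∩ Metric.ball x r) ∧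
    ∀ i j k : Fin 3, i ≠ j → j ≠ k → i ≠ k →
      c * r ≤ Metric.infDist (h (eY i)) (h '' armPair j k)

/-- `X` is `c`-antenna-like: `B_X(x,r)` has a `c`-antenna for all `x ∈ X`, `0 < r < diam X / 2`. -/
def AntennaLike (X : Type*) [MetricSpace X] (c : ℝ) : Prop :=
  ∀ (x : X) (r : ℝ), 0 < r → r < Metric.diam (Set.univ : Set X) / 2 → HasAntenna x r c

lemma eY_mem_armPair_left (j k : Fin 3) : eY j ∈ armPair j k :=
  Or.inl (right_mem_segment ℝ 0 (stdVec j))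

lemma eY_mem_armPair_right (j k : Fin 3) : eY k ∈ armPair j k :=
  Or.inr (right_mem_segment ℝ 0 (stdVec k))

lemma isConnected_arm_image {E : Type*} [MetricSpace E] (h : antennaY → E)
    (hc : Continuous h) (j k : Fin 3) : IsConnected (h '' armPair j k) := by
  set W : Set (EuclideanSpace ℝ (Fin 3)) :=
    segment ℝ 0 (stdVec j) ∪ segment ℝ 0 (stdVec k) with hW
  have hWY : W ⊆ antennaY := by
    rintro w (hw | hw)
    · exact Set.mem_iUnion.2 ⟨j, hw⟩
    · exact Set.mem_iUnion.2 ⟨k, hw⟩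
  have hWconn : IsConnected W := by
    apply IsConnected.union ⟨0, left_mem_segment ℝ 0 (stdVec j), left_mem_segment ℝ 0 (stdVec k)⟩
    · exact (convex_segment _ _).isConnected ⟨_, left_mem_segment ℝ 0 (stdVec j)⟩
    · exact (convex_segment _ _).isConnected ⟨_, left_mem_segment ℝ 0 (stdVec k)⟩
  haveI : ConnectedSpace W := Subtype.connectedSpace hWconn
  have key : h '' armPair j k = Set.range (fun w : W => h ⟨w.1, hWY w.2⟩) := by
    ext e
    constructor
    · rintro ⟨p, hp, rfl⟩
      exact ⟨⟨p.1, hp⟩, by simp⟩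
    · rintro ⟨w, rfl⟩
      exact ⟨⟨w.1, hWY w.2⟩, w.2, rfl⟩
  rw [key]
  exact isConnected_range (hc.comp (by continuity))

/-- **Theorem.** If `X ⊆ ℓ^∞` is compact and connected, `x ∈ X`, `r > 0`, `c > 0`, and
`X ∩ B(x,r)` has a `c`-antenna, then `β'_X(x,r) ≥ c/14`. -/
theorem betaPrime_ge_of_hasAntenna :
    ∀ X : Set lInf, IsCompact X → IsConnected X →
      ∀ x ∈ X, ∀ r c : ℝ, 0 < r → 0 < c →
        HasAntennaIn X x r c → c / 14 ≤ betaPrime X x r := by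
  intro X _hXc _hXconn x hxX r c hr hc hant
  obtain ⟨h, hemb, hmem, hsep⟩ := hant
  set a : Fin 3 → lInf := fun i => h (eY i) with ha
  have hmemX : ∀ i, a i ∈ X := fun i => (hmem (eY i)).1
  have hmemB : ∀ i, a i ∈ ball x r := fun i => (hmem (eY i)).2
  -- betaPrimeSet is nonempty : straight segment between a 0 and a 1
  have hsep01 : c * r ≤ dist (a 0) (a 1) := by
    refine le_trans (hsep 0 1 2 (by decide) (by decide) (by decide)) ?_
    exact infDist_le_dist_of_mem ⟨eY 1, eY_mem_armPair_left 1 2, rfl⟩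
  have hne01 : a 0 ≠ a 1 := by
    intro hEq
    rw [hEq, dist_self] at hsep01
    nlinarith
  have hnonempty : (betaPrimeSet X x r).Nonempty := by
    set s : ℝ → lInf := fun t => (1 - t) • a 0 + t • a 1 with hs
    have hs0 : s 0 = a 0 := by simp [hs]
    have hs1 : s 1 = a 1 := by simp [hs]
    have hlip : LipschitzWith ‖a 1 - a 0‖₊ s := by
      apply LipschitzWith.of_dist_le_mul
      intro t t'
      have e : s t - s t' = (t - t') • (a 1 - a 0) := by
        simp only [hs]
        module
      calc dist (s t) (s t') = ‖(t - t') • (a 1 - a 0)‖ := by rw [dist_eq_norm, e]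
        _ = ‖a 1 - a 0‖ * dist t t' := by
              rw [norm_smul, Real.dist_eq, Real.norm_eq_abs, mul_comm]
        _ ≤ ↑‖a 1 - a 0‖₊ * dist t t' := le_of_eq (by rw [coe_nnnorm])
    have hbv : eVariationOn s (Set.Icc 0 1) ≠ ⊤ := by
      have hlow : LocallyBoundedVariationOn s (Set.Icc 0 1) :=
        (hlip.lipschitzOnWith (s := Set.Icc (0:ℝ) 1)).locallyBoundedVariationOn
      have := hlow 0 1 (Set.left_mem_Icc.2 zero_le_one) (Set.right_mem_Icc.2 zero_le_one)
      simpa [BoundedVariationOn] using this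
    refine ⟨_, s, hlip.continuous.continuousOn, ?_, ?_, hbv, rfl⟩
    · intro t ht
      exact convex_ball x r (hmemB 0) (hmemB 1) (by linarith [ht.2]) ht.1 (by ring)
    · rw [hs0, hs1]; exact hne01
  apply le_csInf hnonempty
  rintro b ⟨s, hcont, hball, hne, hfin, rfl⟩
  set Γ : Set lInf := s '' Set.Icc 0 1 with hΓ
  have hΓc : IsCompact Γ := isCompact_Icc.image_of_continuousOn hcont
  have hΓne : Γ.Nonempty := ⟨s 0, 0, Set.left_mem_Icc.2 zero_le_one, rfl⟩
  set S : ℝ := ⨆ z ∈ X ∩ ball x r, infDist z Γ with hS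
  set D : ℝ := dist (s 0) (s 1) with hD
  set V : ℝ := (eVariationOn s (Set.Icc 0 1)).toReal with hV
  have hs0b : s 0 ∈ ball x r := hball 0 (Set.left_mem_Icc.2 zero_le_one)
  have hs1b : s 1 ∈ ball x r := hball 1 (Set.right_mem_Icc.2 zero_le_one)
  have hbdd : BddAbove (Set.range fun z => ⨆ _ : z ∈ X ∩ ball x r, infDist z Γ) := by
    refine ⟨2 * r, ?_⟩
    rintro _ ⟨z, rfl⟩
    refine Real.iSup_le (fun hz => ?_) (by positivity)
    have h1 : infDist z Γ ≤ dist z (s 0) :=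
      infDist_le_dist_of_mem ⟨0, Set.left_mem_Icc.2 zero_le_one, rfl⟩
    have h2 : dist z (s 0) ≤ dist z x + dist x (s 0) := dist_triangle _ _ _
    have h3 : dist z x < r := mem_ball.1 hz.2
    have h4 : dist x (s 0) < r := by rw [dist_comm]; exact mem_ball.1 hs0b
    linarith
  have hSle : ∀ w ∈ X ∩ ball x r, infDist w Γ ≤ S := by
    intro w hw
    have : (⨆ _ : w ∈ X ∩ ball x r, infDist w Γ) ≤ S := le_ciSup hbdd w
    rwa [ciSup_pos hw] at this
  have hS0 : 0 ≤ S := le_trans infDist_nonneg (hSle x ⟨hxX, mem_ball_self hr⟩)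
  have hDpos : 0 < D := dist_pos.2 hne
  have hD2r : D ≤ 2 * r := by
    have h1 : dist (s 0) (s 1) ≤ dist (s 0) x + dist x (s 1) := dist_triangle _ _ _
    have h2 : dist (s 0) x < r := mem_ball.1 hs0b
    have h3 : dist x (s 1) < r := by rw [dist_comm]; exact mem_ball.1 hs1b
    rw [hD]; linarith
  have hDV : D ≤ V := by
    have h1 : edist (s 0) (s 1) ≤ eVariationOn s (Set.Icc 0 1) :=
      eVariationOn.edist_le s (Set.left_mem_Icc.2 zero_le_one) (Set.right_mem_Icc.2 zero_le_one)
    have := ENNReal.toReal_mono hfin h1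
    rwa [edist_dist, ENNReal.toReal_ofReal dist_nonneg] at this
  -- the key geometric estimate
  have hnum : c * r / 7 ≤ V - D + S := by
    by_cases hScase : c * r / 7 ≤ S
    · linarith
    push_neg at hScase
    -- choose nearest times for the three tips
    have hts : ∀ i : Fin 3, ∃ ti : ℝ, ti ∈ Set.Icc (0:ℝ) 1 ∧ dist (a i) (s ti) ≤ S := by
      intro i
      obtain ⟨p, hpΓ, hpd⟩ := hΓc.exists_infDist_eq_dist hΓne (a i)
      obtain ⟨ti, hti, rfl⟩ := hpΓ
      exact ⟨ti, hti, by rw [← hpd]; exact hSle (a i) (hmem (eY i))⟩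
    choose t ht hdt using hts
    have key : ∀ jj mm kk : Fin 3, mm ≠ jj → jj ≠ kk → mm ≠ kk →
        t jj ≤ t mm → t mm ≤ t kk → c * r / 7 ≤ V - D + S := by
      intro jj mm kk h1 h2 h3 hjm hmk
      set A : Set lInf := h '' armPair jj kk with hA
      have hAconn : IsConnected A := isConnected_arm_image h hemb.continuous jj kk
      have hsepA : c * r ≤ infDist (a mm) A := hsep mm jj kk h1 h2 h3
      have hajA : a jj ∈ A := ⟨eY jj, eY_mem_armPair_left jj kk, rfl⟩
      have hakA : a kk ∈ A := ⟨eY kk, eY_mem_armPair_right jj kk, rfl⟩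
      have hAX : ∀ z ∈ A, z ∈ X ∩ ball x r := by rintro z ⟨p, _, rfl⟩; exact hmem p
      have htm0 : (0:ℝ) ≤ t mm := (ht mm).1
      have htm1 : t mm ≤ 1 := (ht mm).2
      set Γm : Set lInf := s '' Set.Icc 0 (t mm) with hΓm
      set Γp : Set lInf := s '' Set.Icc (t mm) 1 with hΓp
      have hsubm : Set.Icc (0:ℝ) (t mm) ⊆ Set.Icc 0 1 :=
        Set.Icc_subset_Icc le_rfl htm1
      have hsubp : Set.Icc (t mm) 1 ⊆ Set.Icc 0 1 :=
        Set.Icc_subset_Icc htm0 le_rfl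
      have hΓmc : IsCompact Γm := isCompact_Icc.image_of_continuousOn (hcont.mono hsubm)
      have hΓpc : IsCompact Γp := isCompact_Icc.image_of_continuousOn (hcont.mono hsubp)
      set C1 : Set lInf := {z | infDist z Γm ≤ S} with hC1
      set C2 : Set lInf := {z | infDist z Γp ≤ S} with hC2
      have hC1cl : IsClosed C1 := isClosed_le (continuous_infDist_pt Γm) continuous_const
      have hC2cl : IsClosed C2 := isClosed_le (continuous_infDist_pt Γp) continuous_const
      have hcover : A ⊆ C1 ∪ C2 := by
        intro z hz
        obtain ⟨p, hpΓ, hpd⟩ := hΓc.exists_infDist_eq_dist hΓne z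
        have hpS : dist z p ≤ S := by rw [← hpd]; exact hSle z (hAX z hz)
        obtain ⟨τ, hτ, rfl⟩ := hpΓ
        rcases le_total τ (t mm) with hτm | hτm
        · exact Or.inl (le_trans (infDist_le_dist_of_mem
            (show s τ ∈ Γm from ⟨τ, ⟨hτ.1, hτm⟩, rfl⟩)) hpS)
        · exact Or.inr (le_trans (infDist_le_dist_of_mem
            (show s τ ∈ Γp from ⟨τ, ⟨hτm, hτ.2⟩, rfl⟩)) hpS)
      have hjC1 : a jj ∈ C1 := by
        refine le_trans (infDist_le_dist_of_mem
          (show s (t jj) ∈ Γm from ⟨t jj, ⟨(ht jj).1, hjm⟩, rfl⟩)) (hdt jj)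
      have hkC2 : a kk ∈ C2 := by
        refine le_trans (infDist_le_dist_of_mem
          (show s (t kk) ∈ Γp from ⟨t kk, ⟨hmk, (ht kk).2⟩, rfl⟩)) (hdt kk)
      obtain ⟨z, hzA, hz1, hz2⟩ :=
        isPreconnected_closed_iff.1 hAconn.isPreconnected C1 C2 hC1cl hC2cl hcover
          ⟨a jj, hajA, hjC1⟩ ⟨a kk, hakA, hkC2⟩
      -- nearest points on the two halves
      obtain ⟨pu, hpuΓ, hpud⟩ := hΓmc.exists_infDist_eq_dist
        ⟨s (t mm), t mm, Set.right_mem_Icc.2 htm0, rfl⟩ z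
      obtain ⟨u, hu, rfl⟩ := hpuΓ
      have hzu : dist z (s u) ≤ S := by rw [← hpud]; exact hz1
      obtain ⟨pv, hpvΓ, hpvd⟩ := hΓpc.exists_infDist_eq_dist
        ⟨s (t mm), t mm, Set.left_mem_Icc.2 htm1, rfl⟩ z
      obtain ⟨v, hv, rfl⟩ := hpvΓ
      have hzv : dist z (s v) ≤ S := by rw [← hpvd]; exact hz2
      -- distances
      set d1 := dist (s 0) (s u)
      set d2 := dist (s u) (s (t mm))
      set d3 := dist (s (t mm)) (s v)
      set d4 := dist (s v) (s 1)
      have hzAd : c * r ≤ dist (a mm) z := le_trans hsepA (infDist_le_dist_of_mem hzA)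
      have hd2 : c * r - 2 * S ≤ d2 := by
        have htr : dist (a mm) z ≤ dist (a mm) (s (t mm)) + dist (s (t mm)) (s u)
            + dist (s u) z := dist_triangle4 _ _ _ _
        have e1 : dist (s (t mm)) (s u) = d2 := dist_comm _ _
        have e2 : dist (s u) z = dist z (s u) := dist_comm _ _
        rw [e1, e2] at htr
        linarith [hdt mm, hzu]
      have hd3 : c * r - 2 * S ≤ d3 := by
        have htr : dist (a mm) z ≤ dist (a mm) (s (t mm)) + dist (s (t mm)) (s v)
            + dist (s v) z := dist_triangle4 _ _ _ _
        have e2 : dist (s v) z = dist z (s v) := dist_comm _ _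
        rw [e2] at htr
        linarith [hdt mm, hzv]
      have hduv : dist (s u) (s v) ≤ 2 * S := by
        have htr : dist (s u) (s v) ≤ dist (s u) z + dist z (s v) := dist_triangle _ _ _
        have e : dist (s u) z = dist z (s u) := dist_comm _ _
        rw [e] at htr; linarith
      have hDle : D ≤ d1 + dist (s u) (s v) + d4 := dist_triangle4 _ _ _ _
      -- variation lower bound
      have hu0 : (0:ℝ) ≤ u := hu.1
      have hutm : u ≤ t mm := hu.2
      have htmv : t mm ≤ v := hv.1
      have hv1 : v ≤ 1 := hv.2
      have hsum : d1 + d2 + d3 + d4 ≤ V := by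
        have hsplit : ∀ p q r' : ℝ, p ≤ q → q ≤ r' →
            eVariationOn s (Set.univ ∩ Set.Icc p q) + eVariationOn s (Set.univ ∩ Set.Icc q r')
              = eVariationOn s (Set.univ ∩ Set.Icc p r') :=
          fun p q r' hpq hqr => eVariationOn.Icc_add_Icc s hpq hqr (Set.mem_univ q)
        have e3 := hsplit (t mm) v 1 htmv hv1
        have e2 := hsplit u (t mm) 1 hutm htm1
        have e1 := hsplit 0 u 1 hu0 (le_trans hutm htm1)
        have hedist : ∀ p q : ℝ, p ≤ q →
            ENNReal.ofReal (dist (s p) (s q)) ≤ eVariationOn s (Set.univ ∩ Set.Icc p q) := by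
          intro p q hpq
          rw [← edist_dist]
          exact eVariationOn.edist_le s ⟨Set.mem_univ p, Set.left_mem_Icc.2 hpq⟩
            ⟨Set.mem_univ q, Set.right_mem_Icc.2 hpq⟩
        have hofsum : ENNReal.ofReal (d1 + d2 + d3 + d4) ≤ eVariationOn s (Set.Icc 0 1) := by
          rw [ENNReal.ofReal_add (by positivity) dist_nonneg,
            ENNReal.ofReal_add (by positivity) dist_nonneg,
            ENNReal.ofReal_add dist_nonneg dist_nonneg]
          calc ENNReal.ofReal d1 + ENNReal.ofReal d2 + ENNReal.ofReal d3 + ENNReal.ofReal d4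
              ≤ eVariationOn s (Set.univ ∩ Set.Icc 0 u) + eVariationOn s (Set.univ ∩ Set.Icc u (t mm))
                + eVariationOn s (Set.univ ∩ Set.Icc (t mm) v) + eVariationOn s (Set.univ ∩ Set.Icc v 1) := by
                gcongr
                exacts [hedist 0 u hu0, hedist u (t mm) hutm, hedist (t mm) v htmv, hedist v 1 hv1]
            _ = eVariationOn s (Set.univ ∩ Set.Icc 0 1) := by
                rw [add_assoc, add_assoc, e3, e2, e1]
            _ = eVariationOn s (Set.Icc 0 1) := by rw [Set.univ_inter]
        exact (ENNReal.ofReal_le_iff_le_toReal hfin).1 hofsum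
      linarith
    rcases le_total (t 0) (t 1) with h01 | h01
    · rcases le_total (t 1) (t 2) with h12 | h12
      · exact key 0 1 2 (by decide) (by decide) (by decide) h01 h12
      · rcases le_total (t 0) (t 2) with h02 | h02
        · exact key 0 2 1 (by decide) (by decide) (by decide) h02 h12
        · exact key 2 0 1 (by decide) (by decide) (by decide) h02 h01
    · rcases le_total (t 0) (t 2) with h02 | h02
      · exact key 1 0 2 (by decide) (by decide) (by decide) h01 h02
      · rcases le_total (t 1) (t 2) with h12 | h12
        · exact key 1 2 0 (by decide) (by decide) (by decide) h12 h02
        · exact key 2 1 0 (by decide) (by decide) (by decide) h12 h01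
  -- conclude
  rw [le_div_iff₀ hDpos]
  have h1 : c / 14 * D ≤ c / 14 * (2 * r) :=
    mul_le_mul_of_nonneg_left hD2r (by positivity)
  have h2 : c / 14 * (2 * r) = c * r / 7 := by ring
  linarith
end
end

section
/- There is a universal constant C > 0 such that the following holds. Let H be a real Hilbert space, X ⊆ H a compact connected set, x ∈ X and 0 < r < diam X / 2. Then β''_X(x,r) ≤ β_X(x,r) ≤ C·β''_X(x,r). -/
open Metric Set MeasureTheory

noncomputable section

/-- The values whose infimum (after multiplying by `1/r`) defines Jones' β-number: for each
affine line `L = {p + t·v : t ∈ ℝ}` (with `v ≠ 0`), the quantity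
`sup_{z ∈ X ∩ B(x,r)} dist(z, L) / r`. -/
def jonesBetaSet {H : Type*} [NormedAddCommGroup H] [NormedSpace ℝ H]
    (X : Set H) (x : H) (r : ℝ) : Set ℝ :=
  { b | ∃ p v : H, v ≠ 0 ∧
      b = (⨆ z ∈ X ∩ Metric.ball x r, Metric.infDist z {y | ∃ t : ℝ, y = p + t • v}) / r }

/-- Jones' β-number `β_X(x,r)`. -/
def jonesBeta {H : Type*} [NormedAddCommGroup H] [NormedSpace ℝ H]
    (X : Set H) (x : H) (r : ℝ) : ℝ :=
  sInf (jonesBetaSet X x r)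

/-- The values whose infimum defines `β''_X(x,r)`: for each rectifiable curve
`s : [0,1] → B(x,r)` with `s 0 ≠ s 1`, the quantity
`((ℓ(s) − ‖s(0)−s(1)‖)/‖s(0)−s(1)‖)^{1/2} + sup_{z ∈ X ∩ B(x,r)} dist(z, s([0,1]))/‖s(0)−s(1)‖`. -/
def betaPPSet {H : Type*} [NormedAddCommGroup H] (X : Set H) (x : H) (r : ℝ) : Set ℝ :=
  { b | ∃ s : ℝ → H, ContinuousOn s (Set.Icc 0 1) ∧
      (∀ t ∈ Set.Icc (0:ℝ) 1, s t ∈ Metric.ball x r) ∧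
      s 0 ≠ s 1 ∧ eVariationOn s (Set.Icc 0 1) ≠ ⊤ ∧
      b = Real.sqrt (((eVariationOn s (Set.Icc 0 1)).toReal - dist (s 0) (s 1))
              / dist (s 0) (s 1))
          + (⨆ z ∈ X ∩ Metric.ball x r, Metric.infDist z (s '' Set.Icc 0 1))
              / dist (s 0) (s 1) }

/-- `β''_X(x,r)`. -/
def betaPP {H : Type*} [NormedAddCommGroup H] (X : Set H) (x : H) (r : ℝ) : ℝ :=
  sInf (betaPPSet X x r)

open scoped RealInnerProductSpace NNReal ENNReal

/- ### Auxiliary lemmas -/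

lemma real_biSup_le' {α : Type*} {S : Set α} {f : α → ℝ} {a : ℝ} (ha : 0 ≤ a)
    (h : ∀ z ∈ S, f z ≤ a) : (⨆ z ∈ S, f z) ≤ a :=
  Real.iSup_le (fun z => Real.iSup_le (fun hz => h z hz) ha) ha

lemma le_real_biSup' {α : Type*} {S : Set α} {f : α → ℝ} {M : ℝ} (hM : 0 ≤ M)
    (hb : ∀ z ∈ S, f z ≤ M) {z₀ : α} (hz₀ : z₀ ∈ S) : f z₀ ≤ ⨆ z ∈ S, f z := by
  have hB : BddAbove (Set.range fun z => ⨆ _ : z ∈ S, f z) := by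
    refine ⟨M, ?_⟩
    rintro y ⟨z, rfl⟩
    exact Real.iSup_le (fun hz' => hb z hz') hM
  have h1 : f z₀ = ⨆ _ : z₀ ∈ S, f z₀ := (ciSup_pos (f := fun _ : z₀ ∈ S => f z₀) hz₀).symm
  exact h1.le.trans (le_ciSup hB z₀)

lemma real_biSup_nonneg' {α : Type*} {S : Set α} {f : α → ℝ} (h : ∀ z, 0 ≤ f z) :
    0 ≤ ⨆ z ∈ S, f z :=
  Real.iSup_nonneg fun z => Real.iSup_nonneg fun _ => h z

lemma proj_min' {H : Type*} [NormedAddCommGroup H] [InnerProductSpace ℝ H]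
    {u : H} (hu : ‖u‖ = 1) (y : H) (s : ℝ) :
    ‖y - ⟪y, u⟫ • u‖ ≤ ‖y - s • u‖ := by
  have e1 : ‖y - s • u‖ ^ 2 = ‖y‖ ^ 2 - 2 * (s * ⟪y, u⟫) + s ^ 2 := by
    rw [norm_sub_sq_real, real_inner_smul_right, norm_smul]
    simp [hu, mul_pow]
  have e2 : ‖y - ⟪y, u⟫ • u‖ ^ 2 = ‖y‖ ^ 2 - 2 * (⟪y, u⟫ * ⟪y, u⟫) + ⟪y, u⟫ ^ 2 := by
    rw [norm_sub_sq_real, real_inner_smul_right, norm_smul]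
    simp [hu, mul_pow]
  nlinarith [norm_nonneg (y - s • u), norm_nonneg (y - ⟪y, u⟫ • u), sq_nonneg (s - ⟪y, u⟫)]

lemma seg_mem' {H : Type*} [NormedAddCommGroup H] [NormedSpace ℝ H]
    (X : Set H) (x : H) {r : ℝ} {ρ : ℝ} (hρ0 : 0 < ρ) (hρr : ρ < r)
    {u : H} (hu : ‖u‖ = 1) :
    (⨆ z ∈ X ∩ Metric.ball x r,
        Metric.infDist z ((fun t : ℝ => x + ((2*t-1)*ρ) • u) '' Set.Icc 0 1)) / (2*ρ)
      ∈ betaPPSet X x r := by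
  set s : ℝ → H := fun t : ℝ => x + ((2*t-1)*ρ) • u with hs
  have hsub : ∀ a b : ℝ, s a - s b = (((2*a-1) - (2*b-1))*ρ) • u := by
    intro a b
    simp only [hs, add_sub_add_left_eq_sub, ← sub_smul, sub_mul]
  have hd : dist (s 0) (s 1) = 2*ρ := by
    rw [dist_eq_norm, hsub, norm_smul, hu, mul_one, Real.norm_eq_abs]
    have h0 : ((2*(0:ℝ)-1) - (2*(1:ℝ)-1))*ρ = -(2*ρ) := by ring
    rw [h0, abs_neg, abs_of_nonneg (by linarith)]
  have hne : s 0 ≠ s 1 := by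
    intro h
    rw [h, dist_self] at hd
    linarith
  have hE : eVariationOn s (Set.Icc 0 1) = ENNReal.ofReal (2*ρ) := by
    apply le_antisymm
    · have hf : LipschitzWith 1 (fun c : ℝ => x + c • u) := by
        apply LipschitzWith.of_dist_le_mul
        intro a b
        simp only [dist_eq_norm, add_sub_add_left_eq_sub, ← sub_smul, norm_smul, hu,
          mul_one, one_mul]
        simp
      have hg : MonotoneOn (fun t : ℝ => (2*t-1)*ρ) (Set.Icc 0 1) := by
        intro a _ b _ hab
        dsimp only
        nlinarith [hρ0.le]
      have h1 : eVariationOn (fun t : ℝ => (2*t-1)*ρ) (Set.Icc 0 1) ≤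
          ENNReal.ofReal ((2*(1:ℝ)-1)*ρ - (2*(0:ℝ)-1)*ρ) := by
        have := hg.eVariationOn_le (Set.left_mem_Icc.mpr zero_le_one)
          (Set.right_mem_Icc.mpr zero_le_one)
        rwa [Set.inter_self] at this
      have h2 : eVariationOn s (Set.Icc 0 1) ≤
          ((1 : ℝ≥0) : ℝ≥0∞) * eVariationOn (fun t : ℝ => (2*t-1)*ρ) (Set.Icc 0 1) :=
        hf.lipschitzOnWith.comp_eVariationOn_le (Set.mapsTo_univ _ _)
      rw [ENNReal.coe_one, one_mul] at h2
      refine h2.trans (h1.trans (le_of_eq ?_))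
      congr 1
      ring
    · have h3 := eVariationOn.edist_le s (Set.left_mem_Icc.mpr zero_le_one)
        (Set.right_mem_Icc.mpr (zero_le_one (α := ℝ)))
      rwa [edist_dist, hd] at h3
  refine ⟨s, ?_, ?_, hne, ?_, ?_⟩
  · exact (Continuous.continuousOn (by fun_prop))
  · intro t ht
    rw [mem_ball, dist_eq_norm, hs]
    simp only [add_sub_cancel_left, norm_smul, hu, mul_one, Real.norm_eq_abs]
    rw [abs_mul, abs_of_nonneg hρ0.le]
    have h4 : |2*t-1| ≤ 1 := by
      rw [abs_le]; constructor <;> [linarith [ht.1]; linarith [ht.2]]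
    nlinarith
  · rw [hE]; exact ENNReal.ofReal_ne_top
  · rw [hE, hd, ENNReal.toReal_ofReal (by linarith), sub_self, zero_div, Real.sqrt_zero,
      zero_add]

lemma betaPPSet_nonneg' {H : Type*} [NormedAddCommGroup H] {X : Set H} {x : H} {r : ℝ} :
    ∀ b ∈ betaPPSet X x r, 0 ≤ b := by
  rintro b ⟨s, _, _, _, _, rfl⟩
  exact add_nonneg (Real.sqrt_nonneg _)
    (div_nonneg (real_biSup_nonneg' fun z => Metric.infDist_nonneg) dist_nonneg)

lemma jonesBetaSet_nonneg' {H : Type*} [NormedAddCommGroup H] [NormedSpace ℝ H]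
    {X : Set H} {x : H} {r : ℝ} (hr : 0 ≤ r) :
    ∀ b ∈ jonesBetaSet X x r, 0 ≤ b := by
  rintro b ⟨p, v, hv, rfl⟩
  exact div_nonneg (real_biSup_nonneg' fun z => Metric.infDist_nonneg) hr

/-- Part 1 key lemma: `β'' ≤ b` for every member `b` of the Jones β set. -/
lemma betaPP_le_jones_member {H : Type*} [NormedAddCommGroup H] [InnerProductSpace ℝ H]
    {X : Set H} {x : H} {r : ℝ} (hx : x ∈ X) (hr : 0 < r) {p v : H} (hv : v ≠ 0) :
    betaPP X x r ≤
      (⨆ z ∈ X ∩ Metric.ball x r, Metric.infDist z {y | ∃ t : ℝ, y = p + t • v}) / r := by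
  set L := {y : H | ∃ t : ℝ, y = p + t • v} with hL
  set S := ⨆ z ∈ X ∩ Metric.ball x r, Metric.infDist z L with hSdef
  have hS0 : 0 ≤ S := real_biSup_nonneg' fun z => Metric.infDist_nonneg
  have hxmem : x ∈ X ∩ Metric.ball x r := ⟨hx, mem_ball_self hr⟩
  have hMbound : ∀ z ∈ X ∩ Metric.ball x r,
      Metric.infDist z L ≤ Metric.infDist x L + r := by
    intro z hz
    refine (Metric.infDist_le_infDist_add_dist (y := x)).trans ?_
    have := mem_ball.mp hz.2
    linarith
  have hM0 : 0 ≤ Metric.infDist x L + r := by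
    have := Metric.infDist_nonneg (x := x) (s := L); linarith
  have hzS : ∀ z ∈ X ∩ Metric.ball x r, Metric.infDist z L ≤ S :=
    fun z hz => le_real_biSup' hM0 hMbound hz
  have hdS : Metric.infDist x L ≤ S := hzS x hxmem
  set u := ‖v‖⁻¹ • v with hudef
  have hu : ‖u‖ = 1 := norm_smul_inv_norm hv
  have hLne : L.Nonempty := ⟨p + (0:ℝ) • v, ⟨0, rfl⟩⟩
  have hproj : ∀ z : H, ‖z - (x + ⟪z - x, u⟫ • u)‖ ≤
      Metric.infDist z L + Metric.infDist x L := by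
    intro z
    refine le_of_forall_pos_le_add (fun η hη => ?_)
    obtain ⟨q, hqL, hq⟩ := (Metric.infDist_lt_iff hLne).mp
      (show Metric.infDist z L < Metric.infDist z L + η/2 by linarith)
    obtain ⟨q₀, hq₀L, hq0⟩ := (Metric.infDist_lt_iff hLne).mp
      (show Metric.infDist x L < Metric.infDist x L + η/2 by linarith)
    obtain ⟨τ, rfl⟩ := hqL
    obtain ⟨τ₀, rfl⟩ := hq₀L
    have hsmul : ((τ - τ₀) * ‖v‖) • u = (τ - τ₀) • v := by
      rw [hudef, smul_smul, mul_assoc, mul_inv_cancel₀ (norm_ne_zero_iff.mpr hv), mul_one]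
    have h1 : ‖(z - x) - ⟪z - x, u⟫ • u‖ ≤ ‖(z - x) - ((τ - τ₀) * ‖v‖) • u‖ :=
      proj_min' hu _ _
    have h2 : z - (x + ⟪z - x, u⟫ • u) = (z - x) - ⟪z - x, u⟫ • u := by abel
    have h3 : (z - x) - (τ - τ₀) • v = (z - (p + τ • v)) + ((p + τ₀ • v) - x) := by
      rw [sub_smul]; abel
    have h4 : ‖(z - x) - (τ - τ₀) • v‖ ≤ ‖z - (p + τ • v)‖ + ‖(p + τ₀ • v) - x‖ :=
      h3 ▸ norm_add_le _ _
    rw [h2]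
    refine h1.trans ?_
    rw [hsmul]
    refine h4.trans ?_
    rw [← dist_eq_norm z (p + τ • v)] at *
    have h5 : ‖(p + τ₀ • v) - x‖ = dist x (p + τ₀ • v) := by
      rw [dist_eq_norm, norm_sub_rev]
    rw [h5]
    linarith
  refine le_of_forall_pos_le_add (fun ε hε => ?_)
  have hK0 : (0:ℝ) < r + 2*S + 2*ε*r + 1 := by nlinarith
  set δ := ε * r^2 / (r + 2*S + 2*ε*r + 1) with hδ
  have hδ0 : 0 < δ := div_pos (by positivity) hK0
  have hδK : δ * (r + 2*S + 2*ε*r + 1) = ε * r^2 := by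
    rw [hδ]; field_simp
  have hδr2 : δ ≤ r/2 := by
    rw [hδ, div_le_iff₀ hK0]; nlinarith
  set ρ := r - δ with hρdef
  have hρ0 : 0 < ρ := by rw [hρdef]; linarith
  have hρr : ρ < r := by rw [hρdef]; linarith
  have hmem := seg_mem' X x hρ0 hρr hu
  set s : ℝ → H := fun t : ℝ => x + ((2*t-1)*ρ) • u with hs
  have hsup : (⨆ z ∈ X ∩ Metric.ball x r, Metric.infDist z (s '' Set.Icc 0 1)) ≤
      2*S + δ := by
    refine real_biSup_le' (by nlinarith) ?_
    intro z hz
    set t' := ⟪z - x, u⟫ with ht'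
    have ht'r : |t'| < r := by
      calc |t'| ≤ ‖z - x‖ * ‖u‖ := abs_real_inner_le_norm _ _
        _ = ‖z - x‖ := by rw [hu, mul_one]
        _ < r := by rw [← dist_eq_norm]; exact mem_ball.mp hz.2
    set c := max (-ρ) (min ρ t') with hc
    have hc1 : -ρ ≤ c := le_max_left _ _
    have hc2 : c ≤ ρ := max_le (by linarith) (min_le_left _ _)
    have hcmem : x + c • u ∈ s '' Set.Icc 0 1 := by
      refine ⟨(c/ρ + 1)/2, ⟨?_, ?_⟩, ?_⟩
      · have h6 : (-1:ℝ) ≤ c/ρ := by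
          rw [le_div_iff₀ hρ0]; linarith
        linarith
      · have h7 : c/ρ ≤ 1 := by
          rw [div_le_one hρ0]; exact hc2
        linarith
      · show x + ((2*((c/ρ + 1)/2)-1)*ρ) • u = x + c • u
        congr 2
        field_simp
        ring
    have h5 : Metric.infDist z (s '' Set.Icc 0 1) ≤ ‖z - (x + c • u)‖ := by
      rw [← dist_eq_norm]; exact Metric.infDist_le_dist_of_mem hcmem
    have h6 : ‖z - (x + c • u)‖ ≤ ‖z - (x + t' • u)‖ + |t' - c| := by
      have h8 : z - (x + c • u) = (z - (x + t' • u)) + (t' - c) • u := by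
        rw [sub_smul]; abel
      rw [h8]
      refine (norm_add_le _ _).trans ?_
      rw [norm_smul, hu, mul_one, Real.norm_eq_abs]
    have h7 : |t' - c| ≤ δ := by
      rcases le_total t' (-ρ) with h | h
      · have hmin : min ρ t' = t' := min_eq_right (by linarith)
        have hcc : c = -ρ := by rw [hc, hmin]; exact max_eq_left h
        rw [hcc]
        have : -t' < r := by
          have := neg_abs_le t'; linarith [abs_lt.mp ht'r]
        rw [abs_of_nonpos (by linarith), hρdef]
        linarith
      · rcases le_total ρ t' with h' | h'
        · have hmin : min ρ t' = ρ := min_eq_left h'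
          have hcc : c = ρ := by rw [hc, hmin]; exact max_eq_right (by linarith)
          rw [hcc, abs_of_nonneg (by linarith), hρdef]
          have := (abs_lt.mp ht'r).2
          linarith
        · have hmin : min ρ t' = t' := min_eq_right h'
          have hcc : c = t' := by rw [hc, hmin]; exact max_eq_right h
          rw [hcc, sub_self, abs_zero]
          linarith
    have h9 := hproj z
    have h10 : Metric.infDist z L ≤ S := hzS z hz
    linarith
  have hlow : betaPP X x r ≤
      (⨆ z ∈ X ∩ Metric.ball x r, Metric.infDist z (s '' Set.Icc 0 1)) / (2*ρ) :=
    csInf_le ⟨0, fun b hb => betaPPSet_nonneg' b hb⟩ hmem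
  refine hlow.trans ?_
  have h2ρ : (0:ℝ) < 2*ρ := by linarith
  have h11 : (⨆ z ∈ X ∩ Metric.ball x r, Metric.infDist z (s '' Set.Icc 0 1)) / (2*ρ) ≤
      (2*S + δ) / (2*ρ) := by gcongr
  refine h11.trans ?_
  have h12 : S/r + ε = (S + ε*r)/r := by field_simp
  rw [h12, div_le_div_iff₀ h2ρ hr]
  nlinarith [hδK, hδ0, mul_pos hε (mul_pos hr hr)]

set_option maxHeartbeats 2000000 in
private lemma chord_alg (A B h cc d ℓ E : ℝ) (hA0 : 0 ≤ A) (hB0 : 0 ≤ B) (hh0 : 0 ≤ h)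
    (hd0 : 0 < d) (hE0 : 0 ≤ E) (hE1 : E ≤ 1) (hld : d ≤ ℓ)
    (hA2 : A^2 = h^2 + cc^2*d^2) (hB2 : B^2 = h^2 + (cc-1)^2*d^2)
    (hABl : A + B ≤ ℓ) (hE2d : E^2 * d = ℓ - d) : h ≤ E*d := by
  have hABsq : (A+B)^2 ≤ ℓ^2 := by nlinarith [hA0, hB0, hABl]
  have hexp : (A+B)^2 = A^2 + B^2 + 2*(A*B) := by ring
  have hprod : (A*B)^2 = (h^2 + cc*(1-cc)*d^2)^2 + d^2*h^2*(1-2*cc)^2 := by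
    rw [mul_pow, hA2, hB2]; ring
  have hABge : h^2 + cc*(1-cc)*d^2 ≤ A*B := by
    rcases le_or_gt (h^2 + cc*(1-cc)*d^2) 0 with hneg | hposq
    · exact hneg.trans (mul_nonneg hA0 hB0)
    · have h1 : (h^2 + cc*(1-cc)*d^2)^2 ≤ (A*B)^2 := by
        nlinarith [hprod, sq_nonneg (d*h*(1-2*cc))]
      have h2 := Real.sqrt_le_sqrt h1
      rwa [Real.sqrt_sq hposq.le, Real.sqrt_sq (mul_nonneg hA0 hB0)] at h2
  have hq : 4*h^2 + d^2 ≤ ℓ^2 := by nlinarith [hABsq, hexp, hA2, hB2, hABge]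
  have hE2le1 : E^2 ≤ 1 := by nlinarith
  have hl2 : ℓ^2 = d^2 + 2*E^2*d^2 + E^4*d^2 := by
    have hll : ℓ = d + E^2*d := by linarith
    rw [hll]; ring
  have h3 : 4*h^2 ≤ 3*(E^2*d^2) := by
    nlinarith [hq, hl2,
      mul_nonneg (mul_nonneg (sq_nonneg E) (sq_nonneg d)) (sub_nonneg.mpr hE2le1)]
  nlinarith [h3, hh0, mul_nonneg hE0 hd0.le, sq_nonneg (h - E*d), sq_nonneg (h + E*d)]

lemma final_alg (G E d r : ℝ) (hG0 : 0 ≤ G) (hE0 : 0 ≤ E) (hd0 : 0 < d)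
    (hr : 0 < r) (hd2r : d < 2*r) : (G + E*d)/r ≤ 4*(E + G/d) := by
  rw [div_le_iff₀ hr]
  have hGd : G/d*d = G := div_mul_cancel₀ _ hd0.ne'
  nlinarith [mul_nonneg hE0 (by linarith : (0:ℝ) ≤ 4*r - d),
    mul_nonneg (div_nonneg hG0 hd0.le) (by linarith : (0:ℝ) ≤ 4*r - d), hGd]

set_option maxHeartbeats 1000000 in
/-- Part 2 key lemma: `β ≤ 4·b` for every member `b` of the `β''` set. -/
lemma jones_le_four_mul_betaPP_member {H : Type*} [NormedAddCommGroup H]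
    [InnerProductSpace ℝ H] {X : Set H} {x : H} {r : ℝ} (hr : 0 < r) :
    ∀ b ∈ betaPPSet X x r, jonesBeta X x r ≤ 4 * b := by
  rintro b ⟨s, hcont, hball, hne01, hfin, rfl⟩
  set d := dist (s 0) (s 1) with hddef
  have hd0 : 0 < d := dist_pos.mpr hne01
  set ℓ := (eVariationOn s (Set.Icc 0 1)).toReal with hldef
  have hℓ0 : 0 ≤ ℓ := ENNReal.toReal_nonneg
  set v := s 1 - s 0 with hvdef
  have hv : v ≠ 0 := sub_ne_zero.mpr (Ne.symm hne01)
  have hdv : d = ‖v‖ := by rw [hddef, dist_eq_norm, norm_sub_rev, hvdef]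
  have h0mem : (0:ℝ) ∈ Set.Icc (0:ℝ) 1 := Set.left_mem_Icc.mpr zero_le_one
  have h1mem : (1:ℝ) ∈ Set.Icc (0:ℝ) 1 := Set.right_mem_Icc.mpr zero_le_one
  have hld : d ≤ ℓ := by
    have h := eVariationOn.edist_le s h0mem h1mem
    have h2 := ENNReal.toReal_mono hfin h
    rwa [← dist_edist] at h2
  have hd2r : d < 2*r := by
    have h0 := mem_ball.mp (hball 0 h0mem)
    have h1 := mem_ball.mp (hball 1 h1mem)
    calc d ≤ dist (s 0) x + dist x (s 1) := dist_triangle _ _ _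
      _ = dist (s 0) x + dist (s 1) x := by rw [dist_comm x (s 1)]
      _ < 2*r := by linarith
  set E := Real.sqrt ((ℓ - d)/d) with hEdef
  have hE0 : 0 ≤ E := Real.sqrt_nonneg _
  have hE2 : E^2 = (ℓ - d)/d := Real.sq_sqrt (div_nonneg (by linarith) hd0.le)
  have hE2d : E^2 * d = ℓ - d := by rw [hE2]; field_simp
  set G := ⨆ z ∈ X ∩ Metric.ball x r, Metric.infDist z (s '' Set.Icc 0 1) with hGdef
  have hG0 : 0 ≤ G := real_biSup_nonneg' fun z => Metric.infDist_nonneg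
  have hGd0 : 0 ≤ G/d := div_nonneg hG0 hd0.le
  have hjlow : BddBelow (jonesBetaSet X x r) :=
    ⟨0, fun b hb => jonesBetaSet_nonneg' hr.le b hb⟩
  show jonesBeta X x r ≤ 4 * (E + G / d)
  clear_value d ℓ E G
  rcases le_or_gt E 1 with hE1 | hE1
  · -- main case : E ≤ 1
    have hGb : ∀ z ∈ X ∩ Metric.ball x r, Metric.infDist z (s '' Set.Icc 0 1) ≤ G := by
      rw [hGdef]
      intro z hz
      refine le_real_biSup' (f := fun z => Metric.infDist z (s '' Set.Icc 0 1))
        (M := Metric.infDist x (s '' Set.Icc 0 1) + r) ?_ ?_ hz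
      · have := Metric.infDist_nonneg (x := x) (s := s '' Set.Icc 0 1); linarith
      · intro z' hz'
        refine (Metric.infDist_le_infDist_add_dist (y := x)).trans ?_
        have := mem_ball.mp hz'.2
        linarith
    have himg_ne : (s '' Set.Icc 0 1).Nonempty := ⟨s 0, mem_image_of_mem s h0mem⟩
    have hchord : ∀ t ∈ Set.Icc (0:ℝ) 1,
        ∃ y ∈ {y : H | ∃ τ : ℝ, y = s 0 + τ • v}, dist (s t) y ≤ E * d := by
      intro t ht
      set a := s t - s 0 with ha
      set cc := ⟪a, v⟫ / ‖v‖^2 with hcc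
      refine ⟨s 0 + cc • v, ⟨cc, rfl⟩, ?_⟩
      set w := a - cc • v with hw
      have hvn0 : ‖v‖ ≠ 0 := norm_ne_zero_iff.mpr hv
      have horth : ⟪w, v⟫ = 0 := by
        rw [hw, inner_sub_left, real_inner_smul_left, hcc, real_inner_self_eq_norm_sq]
        field_simp
        ring
      set h := ‖w‖ with hh
      have hh0 : 0 ≤ h := norm_nonneg _
      set A := dist (s t) (s 0) with hA
      set B := dist (s t) (s 1) with hB
      have hA0 : (0:ℝ) ≤ A := dist_nonneg
      have hB0 : (0:ℝ) ≤ B := dist_nonneg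
      have haw : a = w + cc • v := by rw [hw]; abel
      have hA2 : A^2 = h^2 + cc^2*d^2 := by
        rw [hA, dist_eq_norm, ← ha, haw, norm_add_sq_real, real_inner_smul_right, horth,
          mul_zero, norm_smul, Real.norm_eq_abs, mul_pow, sq_abs, hdv]
        ring
      have hb1 : s t - s 1 = w + (cc - 1) • v := by
        rw [hw, ha, sub_smul, one_smul, hvdef]; abel
      have hB2 : B^2 = h^2 + (cc-1)^2*d^2 := by
        rw [hB, dist_eq_norm, hb1, norm_add_sq_real, real_inner_smul_right, horth,
          mul_zero, norm_smul, Real.norm_eq_abs, mul_pow, sq_abs, hdv]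
        ring
      have hABl : A + B ≤ ℓ := by
        set uu : ℕ → ℝ := fun i => if i = 0 then 0 else if i = 1 then t else 1 with huu
        have hmono : Monotone uu := by
          apply monotone_nat_of_le_succ
          intro n
          match n with
          | 0 => simpa [huu] using ht.1
          | 1 => simpa [huu] using ht.2
          | (n+2) => simp [huu]
        have humem : ∀ i, uu i ∈ Set.Icc (0:ℝ) 1 := by
          intro i
          match i with
          | 0 => simpa [huu] using ⟨le_refl (0:ℝ), zero_le_one⟩
          | 1 => simpa [huu] using ht
          | (n+2) => simp [huu]
        have hsum := eVariationOn.sum_le (f := s) (n := 2) hmono humem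
        rw [Finset.sum_range_succ, Finset.sum_range_one] at hsum
        have huu0 : uu 0 = 0 := by simp [huu]
        have huu1 : uu 1 = t := by simp [huu]
        have huu2 : uu 2 = 1 := by simp [huu]
        rw [huu0, huu1, huu2] at hsum
        have h2 := ENNReal.toReal_mono hfin hsum
        rw [ENNReal.toReal_add (edist_ne_top _ _) (edist_ne_top _ _)] at h2
        rw [← dist_edist, ← dist_edist] at h2
        rw [hA, hB, dist_comm (s t) (s 1), hldef]
        linarith
      clear_value a cc w h A B
      have hEd : h ≤ E*d := chord_alg A B h cc d ℓ E hA0 hB0 hh0 hd0 hE0 hE1 hld hA2 hB2 hABl hE2d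
      calc dist (s t) (s 0 + cc • v) = ‖a - cc • v‖ := by rw [dist_eq_norm, ha]; abel_nf
        _ = h := by rw [hh, hw]
        _ ≤ E*d := hEd
    -- the line through s 0 with direction v
    have hmem1 : (⨆ z ∈ X ∩ Metric.ball x r,
        Metric.infDist z {y : H | ∃ τ : ℝ, y = s 0 + τ • v}) / r ∈ jonesBetaSet X x r :=
      ⟨s 0, v, hv, rfl⟩
    have hjb : jonesBeta X x r ≤ (⨆ z ∈ X ∩ Metric.ball x r,
        Metric.infDist z {y : H | ∃ τ : ℝ, y = s 0 + τ • v}) / r := csInf_le hjlow hmem1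
    have hb1 : (⨆ z ∈ X ∩ Metric.ball x r,
        Metric.infDist z {y : H | ∃ τ : ℝ, y = s 0 + τ • v}) ≤ G + E*d := by
      refine real_biSup_le' (by positivity) ?_
      intro z hz
      refine le_of_forall_pos_le_add (fun η hη => ?_)
      obtain ⟨m, hm, hdm⟩ := (Metric.infDist_lt_iff himg_ne).mp
        (show Metric.infDist z (s '' Set.Icc 0 1) <
          Metric.infDist z (s '' Set.Icc 0 1) + η by linarith)
      obtain ⟨t, ht, rfl⟩ := hm
      obtain ⟨y, hyL, hy⟩ := hchord t ht
      have h5 : Metric.infDist z {y : H | ∃ τ : ℝ, y = s 0 + τ • v} ≤ dist z y :=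
        Metric.infDist_le_dist_of_mem hyL
      have htri : dist z y ≤ dist z (s t) + dist (s t) y := dist_triangle _ _ _
      have hzG : Metric.infDist z (s '' Set.Icc 0 1) ≤ G := hGb z hz
      linarith
    have h12 : (⨆ z ∈ X ∩ Metric.ball x r,
        Metric.infDist z {y : H | ∃ τ : ℝ, y = s 0 + τ • v}) / r ≤ (G + E*d)/r := by
      gcongr
    have hfin2 : (G + E*d)/r ≤ 4*(E + G/d) := final_alg G E d r hG0 hE0 hd0 hr hd2r
    linarith
  · -- degenerate case : E > 1
    have hmem0 : (⨆ z ∈ X ∩ Metric.ball x r,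
        Metric.infDist z {y : H | ∃ τ : ℝ, y = x + τ • v}) / r ∈ jonesBetaSet X x r :=
      ⟨x, v, hv, rfl⟩
    have hsup0 : (⨆ z ∈ X ∩ Metric.ball x r,
        Metric.infDist z {y : H | ∃ τ : ℝ, y = x + τ • v}) ≤ r := by
      refine real_biSup_le' hr.le ?_
      intro z hz
      have hxL : x ∈ {y : H | ∃ τ : ℝ, y = x + τ • v} := ⟨0, by simp⟩
      exact (Metric.infDist_le_dist_of_mem hxL).trans (mem_ball.mp hz.2).le
    have hb0 : (⨆ z ∈ X ∩ Metric.ball x r,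
        Metric.infDist z {y : H | ∃ τ : ℝ, y = x + τ • v}) / r ≤ 1 := by
      rw [div_le_one hr]; exact hsup0
    have hjb : jonesBeta X x r ≤ (⨆ z ∈ X ∩ Metric.ball x r,
        Metric.infDist z {y : H | ∃ τ : ℝ, y = x + τ • v}) / r := csInf_le hjlow hmem0
    nlinarith [hjb, hb0, hE1, hGd0]

/-- **Proposition.** In a real Hilbert space, `β''_X(x,r) ≤ β_X(x,r) ≤ C·β''_X(x,r)` for a
universal constant `C > 0`, whenever `X` is compact connected, `x ∈ X`, `0 < r < diam X / 2`. -/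
theorem betaPP_le_jonesBeta_le_betaPP :
    ∃ C : ℝ, 0 < C ∧
      ∀ (H : Type*) [NormedAddCommGroup H] [InnerProductSpace ℝ H] [CompleteSpace H],
        ∀ X : Set H, IsCompact X → IsConnected X →
          ∀ x ∈ X, ∀ r : ℝ, 0 < r → r < Metric.diam X / 2 →
            betaPP X x r ≤ jonesBeta X x r ∧
            jonesBeta X x r ≤ C * betaPP X x r := by
  refine ⟨4, by norm_num, ?_⟩
  intro H _ _ _ X hXcomp hXconn x hx r hr hrd
  have hdiam : 0 < Metric.diam X := by
    have := Metric.diam_nonneg (s := X)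
    linarith
  have hnontriv : X.Nontrivial := by
    by_contra hns
    rw [Set.not_nontrivial_iff] at hns
    have := Metric.diam_subsingleton hns
    linarith
  obtain ⟨a, ha, b, hb, hab⟩ := hnontriv
  have hv0 : a - b ≠ 0 := sub_ne_zero.mpr hab
  have hne1 : (jonesBetaSet X x r).Nonempty := ⟨_, x, a - b, hv0, rfl⟩
  have hu : ‖(‖a - b‖⁻¹ • (a - b) : H)‖ = 1 := norm_smul_inv_norm hv0
  have hne2 : (betaPPSet X x r).Nonempty :=
    ⟨_, seg_mem' X x (show (0:ℝ) < r/2 by linarith) (by linarith) hu⟩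
  constructor
  · refine le_csInf hne1 ?_
    rintro b' ⟨p, v, hv, rfl⟩
    exact betaPP_le_jones_member hx hr hv
  · have h4 := jones_le_four_mul_betaPP_member (X := X) (x := x) hr
    have hlb : jonesBeta X x r / 4 ≤ betaPP X x r :=
      le_csInf hne2 (fun b' hb' => by linarith [h4 b' hb'])
    linarith
end
end

section
/- With the cube construction below, assume M > 4 and c ∈ (0, 1/8). Then: (1) for all Q, R ∈ Δ with Q ∩ R ≠ ∅, either Q ⊆ R or R ⊆ Q; (2) for every Q ∈ Δ, B_Q ⊆ Q ⊆ (1 + 8M⁻¹)B_Q. -/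
open Metric Set MeasureTheory

noncomputable section

/-- The scaled ball `cB` for `B = B(x, M^{-n}) ∈ 𝓑_n`. -/
def cBall (M c : ℝ) (x : lInf) (n : ℕ) : Set lInf :=
  Metric.ball x (c * M ^ (-(n : ℤ)))

/-- The increasing sequence of sets `Q⁰_B ⊆ Q¹_B ⊆ ⋯` building the cube `Q_B`:
`Q⁰_B = cB` and `Q^{j+1}_B = Q^j_B ∪ ⋃ {cB' : B' ∈ ⋃_{m ≥ n} 𝓑_m, cB' ∩ Q^j_B ≠ ∅}`. -/
def coreAux (M c : ℝ) (Xn : ℕ → Set lInf) (x : lInf) (n : ℕ) : ℕ → Set lInf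
  | 0 => cBall M c x n
  | j + 1 => coreAux M c Xn x n j ∪
      ⋃ (m : ℕ) (_ : n ≤ m) (y : lInf) (_ : y ∈ Xn m)
        (_ : (cBall M c y m ∩ coreAux M c Xn x n j).Nonempty), cBall M c y m

/-- The cube (``core``) `Q_B = ⋃_j Q^j_B` associated to the ball `B = B(x, M^{-n})`. -/
def core (M c : ℝ) (Xn : ℕ → Set lInf) (x : lInf) (n : ℕ) : Set lInf :=
  ⋃ j, coreAux M c Xn x n j

namespace CubeAux

open List

variable {M c : ℝ} {Xn : ℕ → Set lInf}

/-! ### Elementary structure of cores: saturation and nesting -/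

lemma coreAux_subset_core (x : lInf) (n j : ℕ) :
    coreAux M c Xn x n j ⊆ core M c Xn x n :=
  subset_iUnion (fun j => coreAux M c Xn x n j) j

/-- Saturation: any admissible small ball meeting a core is contained in it. -/
lemma sat {n m : ℕ} {x y : lInf} (hnm : n ≤ m) (hy : y ∈ Xn m)
    (h : (cBall M c y m ∩ core M c Xn x n).Nonempty) :
    cBall M c y m ⊆ core M c Xn x n := by
  obtain ⟨z, hz1, hz2⟩ := h
  rw [core, mem_iUnion] at hz2
  obtain ⟨j, hj⟩ := hz2
  refine subset_trans ?_ (coreAux_subset_core x n (j + 1))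
  intro w hw
  rw [coreAux]
  right
  simp only [mem_iUnion]
  exact ⟨m, hnm, y, hy, ⟨z, hz1, hj⟩, hw⟩

lemma down {n m : ℕ} {x y : lInf} (hnm : n ≤ m) :
    ∀ j, (coreAux M c Xn y m j ∩ core M c Xn x n).Nonempty →
      (cBall M c y m ∩ core M c Xn x n).Nonempty := by
  intro j
  induction j with
  | zero => exact fun h => h
  | succ j ih =>
    rintro ⟨z, hz1, hz2⟩
    rw [coreAux] at hz1
    rcases hz1 with hz1 | hz1
    · exact ih ⟨z, hz1, hz2⟩
    · simp only [mem_iUnion] at hz1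
      obtain ⟨m', hm', y', hy', ⟨w, hw1, hw2⟩, hz'⟩ := hz1
      have hsub : cBall M c y' m' ⊆ core M c Xn x n :=
        sat (hnm.trans hm') hy' ⟨z, hz', hz2⟩
      exact ih ⟨w, hw2, hsub hw1⟩

lemma up {n m : ℕ} {x y : lInf} (hnm : n ≤ m)
    (h : cBall M c y m ⊆ core M c Xn x n) :
    ∀ j, coreAux M c Xn y m j ⊆ core M c Xn x n := by
  intro j
  induction j with
  | zero => exact h
  | succ j ih =>
    rw [coreAux]
    refine union_subset ih ?_
    intro z hz
    simp only [mem_iUnion] at hz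
    obtain ⟨m', hm', y', hy', ⟨w, hw1, hw2⟩, hz'⟩ := hz
    exact sat (hnm.trans hm') hy' ⟨w, hw1, ih hw2⟩ hz'

/-- If two cores meet, the one of smaller scale contains the other. -/
lemma nest {n m : ℕ} {x y : lInf} (hnm : n ≤ m) (hy : y ∈ Xn m)
    (h : (core M c Xn x n ∩ core M c Xn y m).Nonempty) :
    core M c Xn y m ⊆ core M c Xn x n := by
  obtain ⟨z, hz1, hz2⟩ := h
  rw [core, mem_iUnion] at hz2
  obtain ⟨j, hj⟩ := hz2
  have h0 : (cBall M c y m ∩ core M c Xn x n).Nonempty := down hnm j ⟨z, hj, hz1⟩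
  have h1 : cBall M c y m ⊆ core M c Xn x n := sat hnm hy h0
  rw [core]
  exact iUnion_subset (up hnm h1)

/-! ### Metric estimates via chains of balls -/

/-- radius of the scaled ball at scale `k`. -/
def rr (M c : ℝ) (k : ℕ) : ℝ := c * M ^ (-(k : ℤ))

lemma rr_pos (hM : 0 < M) (hc : 0 < c) (k : ℕ) : 0 < rr M c k :=
  mul_pos hc (zpow_pos hM _)

lemma rr_succ (hM : 0 < M) (k : ℕ) : rr M c (k + 1) = rr M c k / M := by
  unfold rr
  rw [div_eq_mul_inv, mul_assoc, ← zpow_neg_one, ← zpow_add₀ hM.ne']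
  push_cast
  ring_nf

lemma rr_anti (hM : 1 ≤ M) (hc : 0 ≤ c) {k k' : ℕ} (h : k ≤ k') :
    rr M c k' ≤ rr M c k := by
  unfold rr
  apply mul_le_mul_of_nonneg_left _ hc
  apply zpow_le_zpow_right₀ hM
  omega

/-- Adjacency of two scaled balls (encoded as scale/center pairs). -/
def Adj (M c : ℝ) (a b : ℕ × lInf) : Prop :=
  (cBall M c a.2 a.1 ∩ cBall M c b.2 b.1).Nonempty

lemma dist_of_adj {a b : ℕ × lInf} (h : Adj M c a b) :
    dist a.2 b.2 < rr M c a.1 + rr M c b.1 := by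
  obtain ⟨z, hz1, hz2⟩ := h
  rw [cBall, mem_ball] at hz1 hz2
  calc dist a.2 b.2 ≤ dist a.2 z + dist z b.2 := dist_triangle _ _ _
    _ < rr M c a.1 + rr M c b.1 := by
        rw [dist_comm a.2 z]; exact add_lt_add hz1 hz2

lemma eq_of_close
    (hsep : ∀ n, ∀ x ∈ Xn n, ∀ y ∈ Xn n, x ≠ y → M ^ (-(n : ℤ)) ≤ dist x y)
    {m : ℕ} {a b : lInf} (ha : a ∈ Xn m) (hb : b ∈ Xn m)
    (h : dist a b < M ^ (-(m : ℤ))) : a = b := by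
  by_contra hne
  exact absurd h (not_lt.mpr (hsep m a ha b hb hne))

lemma split_first {α : Type*} (P : α → Prop) :
    ∀ l : List α, (∃ x ∈ l, P x) →
      ∃ l₁ e l₂, l = l₁ ++ e :: l₂ ∧ P e ∧ ∀ x ∈ l₁, ¬ P x := by
  intro l
  induction l with
  | nil => simp
  | cons a t ih =>
    intro h
    by_cases ha : P a
    · exact ⟨[], a, t, rfl, ha, by simp⟩
    · have ht : ∃ x ∈ t, P x := by
        obtain ⟨x, hx, hPx⟩ := h
        rcases mem_cons.mp hx with rfl | hx
        · exact absurd hPx ha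
        · exact ⟨x, hx, hPx⟩
      obtain ⟨l₁, e, l₂, heq, hPe, hl₁⟩ := ih ht
      refine ⟨a :: l₁, e, l₂, by rw [heq, cons_append], hPe, ?_⟩
      intro x hx
      rcases mem_cons.mp hx with rfl | hx
      · exact ha
      · exact hl₁ x hx

/-- A good chain at scales `≥ m`: centers lie in the nets, consecutive balls meet. -/
def Good (M c : ℝ) (Xn : ℕ → Set lInf) (m : ℕ) (l : List (ℕ × lInf)) : Prop :=
  (∀ p ∈ l, m ≤ p.1 ∧ p.2 ∈ Xn p.1) ∧ l.Chain' (Adj M c)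

/-- The main chain estimates, proved by strong induction on the length of the chain.
`A`: if the head of the chain has the minimal scale `m`, every element of the chain is
within `rr m + 4 rr (m+1) - rr p.1` of the head.
`B`: in general, every element is within `4 rr m - rr a.1 - rr p.1` of the head `a`. -/
theorem AB (hM : 4 < M) (hc : 0 < c) (hc8 : c < 1 / 8)
    (hsep : ∀ n, ∀ x ∈ Xn n, ∀ y ∈ Xn n, x ≠ y → M ^ (-(n : ℤ)) ≤ dist x y) :
    ∀ N : ℕ, ∀ l : List (ℕ × lInf), l.length ≤ N →
      (∀ m, Good M c Xn m l → ∀ a t, l = a :: t → a.1 = m →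
        ∀ p ∈ l, dist a.2 p.2 ≤ rr M c m + 4 * rr M c (m + 1) - rr M c p.1) ∧
      (∀ m, Good M c Xn m l → ∀ a t, l = a :: t →
        ∀ p ∈ l, dist a.2 p.2 ≤ 4 * rr M c m - rr M c a.1 - rr M c p.1) := by
  have hM0 : (0 : ℝ) < M := by linarith
  have hM1 : (1 : ℝ) ≤ M := by linarith
  have h4rr : ∀ m : ℕ, 4 * rr M c (m + 1) ≤ rr M c m := by
    intro m
    rw [rr_succ hM0]
    rw [div_eq_mul_inv]
    have h := rr_pos hM0 hc m
    rw [mul_comm (rr M c m) M⁻¹, ← mul_assoc]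
    calc 4 * M⁻¹ * rr M c m ≤ 1 * rr M c m := by
          apply mul_le_mul_of_nonneg_right _ h.le
          rw [← div_eq_mul_inv]
          rw [div_le_one hM0]
          linarith
      _ = rr M c m := one_mul _
  have h8rr : ∀ m : ℕ, 8 * rr M c (m + 1) ≤ 2 * rr M c m := by
    intro m
    have := h4rr m
    linarith
  intro N
  induction N with
  | zero =>
    intro l hlen
    have hl : l = [] := List.eq_nil_of_length_eq_zero (Nat.le_zero.mp hlen)
    subst hl
    exact ⟨fun m _ a t heq => by simp at heq, fun m _ a t heq => by simp at heq⟩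
  | succ N IH =>
    intro l hlen
    -- Part A first (for all m)
    have hA : ∀ m, Good M c Xn m l → ∀ a t, l = a :: t → a.1 = m →
        ∀ p ∈ l, dist a.2 p.2 ≤ rr M c m + 4 * rr M c (m + 1) - rr M c p.1 := by
      intro m hg a t heq ham p hp
      subst heq
      rcases mem_cons.mp hp with rfl | hpt
      · rw [dist_self, ham]
        have := rr_pos hM0 hc (m + 1)
        linarith
      · by_cases hex : ∃ e ∈ t, e.1 = m
        · obtain ⟨t₁, e, t₂, heq2, hem, ht₁⟩ := split_first (fun q => q.1 = m) t hex
          subst heq2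
          have hch := hg.2
          rw [← cons_append, Chain', isChain_append] at hch
          obtain ⟨hchP, hchE, hlink⟩ := hch
          have hmem1 : ∀ q ∈ t₁, m + 1 ≤ q.1 ∧ q.2 ∈ Xn q.1 := by
            intro q hq
            have h1 := hg.1 q (mem_cons_of_mem _ (mem_append_left _ hq))
            exact ⟨Nat.lt_of_le_of_ne h1.1 (fun h => (ht₁ q hq) h.symm), h1.2⟩
          -- facts F1 (zone t₁) and F2 (distance to e)
          have hF : (∀ p' ∈ t₁, dist a.2 p'.2 ≤ rr M c m + 4 * rr M c (m + 1) - rr M c p'.1)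
              ∧ dist a.2 e.2 ≤ 2 * rr M c m + 4 * rr M c (m + 1) := by
            cases t₁ with
            | nil =>
              refine ⟨by simp, ?_⟩
              have hadj : Adj M c a e := by
                have := hlink a (by simp) e (by simp)
                exact this
              have := dist_of_adj hadj
              rw [ham, hem] at this
              have := rr_pos hM0 hc (m + 1)
              linarith [dist_of_adj hadj]
            | cons q t₁' =>
              have hadj : Adj M c a q := (isChain_cons_cons.mp hchP).1
              have hdaq : dist a.2 q.2 < rr M c a.1 + rr M c q.1 := dist_of_adj hadj
              rw [ham] at hdaq
              have hgood : Good M c Xn (m + 1) (q :: t₁') := ⟨hmem1, hchP.tail⟩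
              have hlenq : (q :: t₁').length ≤ N := by
                simp only [length_cons, length_append] at hlen ⊢
                omega
              have hBq := (IH (q :: t₁') hlenq).2 (m + 1) hgood q t₁' rfl
              constructor
              · intro p' hp'
                have := hBq p' hp'
                have := rr_anti hM1 hc.le (Nat.le_add_right m 1)
                calc dist a.2 p'.2 ≤ dist a.2 q.2 + dist q.2 p'.2 := dist_triangle _ _ _
                  _ ≤ rr M c m + 4 * rr M c (m + 1) - rr M c p'.1 := by
                      have := hBq p' hp'
                      linarith
              · -- distance to e via last of t₁
                have hne : (q :: t₁') ≠ [] := cons_ne_nil _ _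
                set s := (q :: t₁').getLast hne with hs
                have hsmem : s ∈ q :: t₁' := getLast_mem hne
                have hds : dist q.2 s.2 ≤ 4 * rr M c (m + 1) - rr M c q.1 - rr M c s.1 :=
                  hBq s hsmem
                have hadj2 : Adj M c s e := by
                  apply hlink s _ e (by simp)
                  rw [getLast?_eq_getLast (l := a :: q :: t₁') (cons_ne_nil _ _)]
                  simp only [Option.mem_some_iff]
                  rw [getLast_cons hne]
                have hdse : dist s.2 e.2 < rr M c s.1 + rr M c e.1 := dist_of_adj hadj2
                rw [hem] at hdse
                calc dist a.2 e.2 ≤ dist a.2 q.2 + (dist q.2 s.2 + dist s.2 e.2) := by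
                      have := dist_triangle a.2 s.2 e.2
                      have := dist_triangle a.2 q.2 s.2
                      linarith [dist_triangle a.2 s.2 e.2, dist_triangle a.2 q.2 s.2]
                  _ ≤ 2 * rr M c m + 4 * rr M c (m + 1) := by linarith
          -- a.2 = e.2
          have hae : a.2 = e.2 := by
            apply eq_of_close hsep (m := m)
            · have := (hg.1 a (mem_cons_self)).2
              rwa [ham] at this
            · have := (hg.1 e (mem_cons_of_mem _ (mem_append_right _ (mem_cons_self)))).2
              rwa [hem] at this
            · have h1 := hF.2
              have h2 := h4rr m
              have h3 : rr M c m = c * M ^ (-(m : ℤ)) := rfl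
              have hX : (0 : ℝ) < M ^ (-(m : ℤ)) := zpow_pos hM0 _
              nlinarith [rr_pos hM0 hc (m + 1)]
          -- now the three zones
          rcases mem_append.mp hpt with hp1 | hp2
          · exact hF.1 p hp1
          · have hgoodE : Good M c Xn m (e :: t₂) := by
              refine ⟨?_, hchE⟩
              intro p' hp'
              exact hg.1 p' (mem_cons_of_mem _ (mem_append_right _ hp'))
            have hlenE : (e :: t₂).length ≤ N := by
              simp only [length_cons, length_append] at hlen ⊢
              omega
            have := (IH (e :: t₂) hlenE).1 m hgoodE e t₂ rfl hem p hp2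
            rw [hae]
            exact this
        · -- no element of scale m in the tail
          push_neg at hex
          cases t with
          | nil => simp at hpt
          | cons q t' =>
            have hadj : Adj M c a q := (isChain_cons_cons.mp hg.2).1
            have hdaq : dist a.2 q.2 < rr M c a.1 + rr M c q.1 := dist_of_adj hadj
            rw [ham] at hdaq
            have hgood : Good M c Xn (m + 1) (q :: t') := by
              refine ⟨?_, hg.2.tail⟩
              intro p' hp'
              have h1 := hg.1 p' (mem_cons_of_mem _ hp')
              exact ⟨Nat.lt_of_le_of_ne h1.1 (fun h => (hex p' hp') h.symm), h1.2⟩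
            have hlenq : (q :: t').length ≤ N := by
              simp only [length_cons] at hlen ⊢
              omega
            have hBq := (IH (q :: t') hlenq).2 (m + 1) hgood q t' rfl p hpt
            calc dist a.2 p.2 ≤ dist a.2 q.2 + dist q.2 p.2 := dist_triangle _ _ _
              _ ≤ rr M c m + 4 * rr M c (m + 1) - rr M c p.1 := by linarith
    refine ⟨hA, ?_⟩
    -- Part B via fuel induction
    have hB : ∀ g : ℕ, ∀ m, (∀ p ∈ l, p.1 ≤ m + g) → Good M c Xn m l →
        ∀ a t, l = a :: t → ∀ p ∈ l,
          dist a.2 p.2 ≤ 4 * rr M c m - rr M c a.1 - rr M c p.1 := by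
      intro g
      induction g with
      | zero =>
        intro m hbd hg a t heq p hp
        have ham : a.1 = m := by
          have h1 := (hg.1 a (heq ▸ mem_cons_self)).1
          have h2 := hbd a (heq ▸ mem_cons_self)
          omega
        have := hA m hg a t heq ham p hp
        rw [ham]
        linarith [hA m hg a t heq ham p hp, h4rr m, rr_pos hM0 hc m]
      | succ g ihg =>
        intro m hbd hg a t heq p hp
        by_cases ham : a.1 = m
        · have := hA m hg a t heq ham p hp
          rw [ham]
          linarith [h4rr m, rr_pos hM0 hc m]
        · by_cases hex : ∃ e ∈ t, e.1 = m
          · subst heq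
            obtain ⟨t₁, e, t₂, heq2, hem, ht₁⟩ := split_first (fun q => q.1 = m) t hex
            subst heq2
            have hch := hg.2
            rw [← cons_append, Chain', isChain_append] at hch
            obtain ⟨hchP, hchE, hlink⟩ := hch
            -- prefix P = a :: t₁ all at scale ≥ m+1
            have hmemP : ∀ q ∈ a :: t₁, m + 1 ≤ q.1 ∧ q.2 ∈ Xn q.1 := by
              intro q hq
              rcases mem_cons.mp hq with rfl | hq'
              · have h1 := hg.1 q (mem_cons_self)
                exact ⟨Nat.lt_of_le_of_ne h1.1 (fun h => ham h.symm), h1.2⟩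
              · have h1 := hg.1 q (mem_cons_of_mem _ (mem_append_left _ hq'))
                exact ⟨Nat.lt_of_le_of_ne h1.1 (fun h => (ht₁ q hq') h.symm), h1.2⟩
            have hgoodP : Good M c Xn (m + 1) (a :: t₁) := ⟨hmemP, hchP⟩
            have hlenP : (a :: t₁).length ≤ N := by
              simp only [length_cons, length_append] at hlen ⊢
              omega
            have hBP := (IH (a :: t₁) hlenP).2 (m + 1) hgoodP a t₁ rfl
            have hnP : (a :: t₁) ≠ [] := cons_ne_nil _ _
            set s := (a :: t₁).getLast hnP with hs
            have hsmem : s ∈ a :: t₁ := getLast_mem hnP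
            have hdas : dist a.2 s.2 ≤ 4 * rr M c (m + 1) - rr M c a.1 - rr M c s.1 :=
              hBP s hsmem
            have hadj2 : Adj M c s e := by
              apply hlink s _ e (by simp)
              rw [getLast?_eq_getLast (l := a :: t₁) hnP]
              simp only [Option.mem_some_iff]
              exact hs.symm
            have hdse : dist s.2 e.2 < rr M c s.1 + rr M c e.1 := dist_of_adj hadj2
            rw [hem] at hdse
            have hgoodE : Good M c Xn m (e :: t₂) := by
              refine ⟨?_, hchE⟩
              intro p' hp'
              exact hg.1 p' (mem_cons_of_mem _ (mem_append_right _ hp'))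
            have hlenE : (e :: t₂).length ≤ N := by
              simp only [length_cons, length_append] at hlen ⊢
              omega
            have hAE := (IH (e :: t₂) hlenE).1 m hgoodE e t₂ rfl hem
            -- zones
            rcases mem_cons.mp hp with rfl | hpt
            · rw [dist_self]
              have h1 := rr_anti hM1 hc.le (hmemP p (mem_cons_self)).1
              have h2 := rr_anti hM1 hc.le (Nat.le_add_right m 1)
              have h3 := rr_pos hM0 hc m
              linarith
            · rcases mem_append.mp hpt with hp1 | hp2
              · have := hBP p (mem_cons_of_mem _ hp1)
                have h2 := rr_anti hM1 hc.le (Nat.le_add_right m 1)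
                linarith
              · have h1 := hAE p hp2
                have h2 := h8rr m
                calc dist a.2 p.2 ≤ dist a.2 s.2 + dist s.2 e.2 + dist e.2 p.2 := by
                      linarith [dist_triangle a.2 e.2 p.2, dist_triangle a.2 s.2 e.2]
                  _ ≤ 4 * rr M c m - rr M c a.1 - rr M c p.1 := by linarith
          · -- everything at scale ≥ m+1
            push_neg at hex
            have hgood : Good M c Xn (m + 1) l := by
              refine ⟨?_, hg.2⟩
              intro p' hp'
              have h1 := hg.1 p' hp'
              rcases mem_cons.mp (heq ▸ hp') with rfl | hp''
              · exact ⟨Nat.lt_of_le_of_ne h1.1 (fun h => ham h.symm), h1.2⟩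
              · exact ⟨Nat.lt_of_le_of_ne h1.1 (fun h => (hex p' hp'') h.symm), h1.2⟩
            have hbd' : ∀ p' ∈ l, p'.1 ≤ (m + 1) + g := by
              intro p' hp'
              have := hbd p' hp'
              omega
            have := ihg (m + 1) hbd' hgood a t heq p hp
            have h2 := rr_anti hM1 hc.le (Nat.le_add_right m 1)
            linarith
    intro m hg a t heq p hp
    refine hB ((l.map Prod.fst).sum) m ?_ hg a t heq p hp
    intro p' hp'
    have : p'.1 ≤ (l.map Prod.fst).sum :=
      List.single_le_sum (fun x _ => Nat.zero_le x) _ (mem_map_of_mem (f := Prod.fst) hp')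
    omega

lemma cover {n : ℕ} {x : lInf} (hx : x ∈ Xn n) :
    ∀ j, ∀ z ∈ coreAux M c Xn x n j,
      ∃ t p, Good M c Xn n ((n, x) :: t) ∧ ((n, x) :: t).getLast? = some p ∧
        p ∈ (n, x) :: t ∧ z ∈ cBall M c p.2 p.1 := by
  intro j
  induction j with
  | zero =>
    intro z hz
    exact ⟨[], (n, x), ⟨by simp [hx], isChain_singleton _⟩, rfl, mem_cons_self, hz⟩
  | succ j ih =>
    intro z hz
    rw [coreAux] at hz
    rcases hz with hz | hz
    · exact ih z hz
    · simp only [mem_iUnion] at hz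
      obtain ⟨m, hm, y, hy, ⟨w, hw1, hw2⟩, hz'⟩ := hz
      obtain ⟨t, p, hgood, hlast, hpmem, hwball⟩ := ih w hw2
      refine ⟨t ++ [(m, y)], (m, y), ⟨?_, ?_⟩, ?_, ?_, hz'⟩
      · intro q hq
        simp only [mem_cons, mem_append, not_mem_nil, or_false] at hq
        rcases hq with rfl | hq | rfl
        · exact hgood.1 _ (mem_cons_self)
        · exact hgood.1 q (mem_cons_of_mem _ hq)
        · exact ⟨hm, hy⟩
      · rw [show (n, x) :: (t ++ [(m, y)]) = ((n, x) :: t) ++ [(m, y)] from rfl,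
          Chain', isChain_append]
        refine ⟨hgood.2, isChain_singleton _, ?_⟩
        intro a ha b hb
        rw [hlast] at ha
        simp only [Option.mem_some_iff, head?_cons] at ha hb
        subst ha; subst hb
        exact ⟨w, hwball, hw1⟩
      · rw [show (n, x) :: (t ++ [(m, y)]) = ((n, x) :: t) ++ [(m, y)] from rfl]
        exact getLast?_concat
      · rw [show (n, x) :: (t ++ [(m, y)]) = ((n, x) :: t) ++ [(m, y)] from rfl]
        exact mem_append_right _ (mem_cons_self)

end CubeAux

open CubeAux List in
/-- **Lemma (cubes).** For `M > 4`, `0 < c < 1/8` and nested maximal `M^{-n}`-nets `X_n` of a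
compact `X ⊆ ℓ^∞`: (1) any two cubes of `Δ` that meet are nested; (2) every cube `Q = Q_B`
with `B = B(x, M^{-n})` satisfies `B_Q ⊆ Q ⊆ (1 + 8M⁻¹)B_Q`, where `B_Q = B(x, c·M^{-n})`. -/
theorem cubes_nested_and_round :
    ∀ M c : ℝ, 4 < M → 0 < c → c < 1 / 8 →
      ∀ X : Set lInf, IsCompact X →
        ∀ Xn : ℕ → Set lInf,
          (∀ n, Xn n ⊆ X) →
          (∀ n, Xn n ⊆ Xn (n + 1)) →
          (∀ n, ∀ x ∈ Xn n, ∀ y ∈ Xn n, x ≠ y → M ^ (-(n : ℤ)) ≤ dist x y) →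
          (∀ n, ∀ x ∈ X, ∃ y ∈ Xn n, dist x y ≤ M ^ (-(n : ℤ))) →
          (∀ n m : ℕ, ∀ x ∈ Xn n, ∀ y ∈ Xn m,
              (core M c Xn x n ∩ core M c Xn y m).Nonempty →
              core M c Xn x n ⊆ core M c Xn y m ∨ core M c Xn y m ⊆ core M c Xn x n) ∧
          (∀ n : ℕ, ∀ x ∈ Xn n,
              Metric.ball x (c * M ^ (-(n : ℤ))) ⊆ core M c Xn x n ∧
              core M c Xn x n ⊆ Metric.ball x ((1 + 8 * M⁻¹) * (c * M ^ (-(n : ℤ))))) := by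
  intro M c hM hc hc8 X hX Xn hXsub hnest hsep hnet
  have hM0 : (0 : ℝ) < M := by linarith
  constructor
  · -- nesting
    intro n m x hx y hy hne
    rcases le_total n m with h | h
    · exact Or.inr (nest h hy hne)
    · obtain ⟨z, hz1, hz2⟩ := hne
      exact Or.inl (nest h hx ⟨z, hz2, hz1⟩)
  · -- roundness
    intro n x hx
    constructor
    · intro z hz
      exact coreAux_subset_core x n 0 (show z ∈ coreAux M c Xn x n 0 from hz)
    · intro z hz
      rw [core, mem_iUnion] at hz
      obtain ⟨j, hj⟩ := hz
      obtain ⟨t, p, hgood, hlast, hpmem, hzball⟩ := cover hx j z hj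
      have hAB : dist x p.2 ≤ rr M c n + 4 * rr M c (n + 1) - rr M c p.1 :=
        (AB hM hc hc8 hsep ((n, x) :: t).length ((n, x) :: t) le_rfl).1 n hgood
          (n, x) t rfl rfl p hpmem
      have hz2 : dist z p.2 < rr M c p.1 := by
        rw [cBall, mem_ball] at hzball
        exact hzball
      rw [mem_ball]
      have h1 : dist z x ≤ dist z p.2 + dist p.2 x := dist_triangle _ _ _
      have h2 : dist p.2 x = dist x p.2 := dist_comm _ _
      have key : (1 + 8 * M⁻¹) * (c * M ^ (-(n : ℤ))) = rr M c n + 8 * rr M c (n + 1) := by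
        rw [rr_succ hM0]
        unfold rr
        field_simp
      have hpos := rr_pos hM0 hc (n + 1)
      linarith
end
end

section
/- With the net-and-ball construction below, assume M > 4 and c ∈ (0, 1/4). If B_0, B_1, …, B_k ∈ 𝓑 are pairwise distinct balls such that cB_j ∩ cB_{j+1} ≠ ∅ for every j = 0,…,k−1, then Σ_{j=0}^{k} diam(cB_j) ≤ (1/(1 − 2M⁻¹)) · max_{0≤j≤k} diam(cB_j). -/
open Metric Set MeasureTheory

noncomputable section

instance : Nontrivial lInf := by
  refine ⟨(lp.single ⊤ 0 1 : lInf), 0, fun h => ?_⟩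
  have h0 : ((lp.single ⊤ 0 1 : lInf) : ∀ n : ℕ, ℝ) 0 = ((0 : lInf) : ∀ n : ℕ, ℝ) 0 := by
    rw [h]
  rw [lp.single_apply_self] at h0
  simp at h0

lemma diam_ball_lInf (x : lInf) {r : ℝ} (hr : 0 ≤ r) :
    Metric.diam (Metric.ball x r) = 2 * r := by
  refine le_antisymm (Metric.diam_ball hr) ?_
  refine le_of_forall_lt fun b hb => ?_
  rcases lt_or_ge b 0 with hb0 | hb0
  · exact hb0.trans_le Metric.diam_nonneg
  · set t : ℝ := (b / 2 + r) / 2 with ht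
    have htr : t < r := by simp only [ht]; linarith
    have hbt : b < 2 * t := by simp only [ht]; linarith
    have ht0 : 0 ≤ t := by simp only [ht]; linarith
    obtain ⟨e, he⟩ := exists_norm_eq lInf ht0
    have h1 : x + e ∈ Metric.ball x r := by
      simp [Metric.mem_ball, dist_eq_norm, he]; linarith
    have h2 : x - e ∈ Metric.ball x r := by
      simp [Metric.mem_ball, dist_eq_norm, norm_sub_rev, he]; linarith
    have h3 : dist (x + e) (x - e) = 2 * t := by
      rw [dist_eq_norm]
      have h4 : x + e - (x - e) = (2:ℝ) • e := by
        rw [two_smul]; abel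
      rw [h4, norm_smul, he]
      simp
    calc b < 2 * t := hbt
      _ = dist (x + e) (x - e) := h3.symm
      _ ≤ Metric.diam (Metric.ball x r) :=
        Metric.dist_le_diam_of_mem isBounded_ball h1 h2


lemma key_chain (M c : ℝ) (hM : 4 < M) (hc : 0 < c) (hc4 : c < 1/4)
    (Xn : ℕ → Set lInf)
    (hsep : ∀ n, ∀ x ∈ Xn n, ∀ y ∈ Xn n, x ≠ y → M ^ (-(n : ℤ)) ≤ dist x y) :
    ∀ k : ℕ, ∀ (x : ℕ → lInf) (lvl : ℕ → ℕ) (m : ℕ),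
      (∀ j ≤ k, x j ∈ Xn (lvl j)) →
      (∀ i ≤ k, ∀ j ≤ k, i ≠ j →
        Metric.ball (x i) (M ^ (-(lvl i : ℤ))) ≠ Metric.ball (x j) (M ^ (-(lvl j : ℤ)))) →
      (∀ j < k, (Metric.ball (x j) (c * M ^ (-(lvl j : ℤ))) ∩
          Metric.ball (x (j + 1)) (c * M ^ (-(lvl (j + 1) : ℤ)))).Nonempty) →
      (∀ j ≤ k, m ≤ lvl j) →
      ∑ j ∈ Finset.range (k + 1), M ^ (-(lvl j : ℤ)) ≤ M ^ (-(m : ℤ)) / (1 - 2 * M⁻¹) := by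
  have hM0 : (0:ℝ) < M := by linarith
  have hMipos : (0:ℝ) < M⁻¹ := by positivity
  have hMi : M⁻¹ < 1/4 := by
    rw [inv_lt_comm₀ hM0 (by norm_num)]
    linarith
  have hD : (1/2 : ℝ) < 1 - 2 * M⁻¹ := by linarith
  have hDpos : (0:ℝ) < 1 - 2 * M⁻¹ := by linarith
  intro k
  induction k using Nat.strong_induction_on with
  | _ k IH =>
  intro x lvl m hmem hne hint hm
  have hpow : ∀ n : ℕ, (0:ℝ) < M ^ (-(n : ℤ)) := fun n => zpow_pos hM0 _
  -- distance between consecutive centers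
  have hdist : ∀ j < k, dist (x j) (x (j+1)) ≤
      c * (M ^ (-(lvl j : ℤ)) + M ^ (-(lvl (j+1) : ℤ))) := by
    intro j hj
    obtain ⟨y, hy1, hy2⟩ := hint j hj
    rw [Metric.mem_ball] at hy1 hy2
    calc dist (x j) (x (j+1)) ≤ dist y (x j) + dist y (x (j+1)) := dist_triangle_left _ _ _
      _ ≤ c * M ^ (-(lvl j : ℤ)) + c * M ^ (-(lvl (j+1) : ℤ)) := by
          exact add_le_add hy1.le hy2.le
      _ = c * (M ^ (-(lvl j : ℤ)) + M ^ (-(lvl (j+1) : ℤ))) := by ring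
  -- the minimum level
  obtain ⟨i0, hi0mem, hi0⟩ := Finset.exists_mem_eq_inf' (Finset.nonempty_range_add_one (n := k)) lvl
  set mmin := (Finset.range (k+1)).inf' Finset.nonempty_range_add_one lvl with hmmin
  have hi0k : i0 ≤ k := by simpa [Nat.lt_succ_iff] using Finset.mem_range.mp hi0mem
  have hminle : ∀ j ≤ k, mmin ≤ lvl j := fun j hj =>
    Finset.inf'_le lvl (Finset.mem_range.mpr (Nat.lt_succ_of_le hj))
  have hmle : m ≤ mmin := hm i0 hi0k |>.trans_eq hi0.symm
  -- powers
  have hfact : M ^ (-((mmin + 1 : ℕ) : ℤ)) = M ^ (-(mmin : ℤ)) * M⁻¹ := by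
    push_cast
    rw [neg_add, zpow_add₀ (ne_of_gt hM0)]
    simp
  -- uniqueness of the minimal level
  have huniq : ∀ p b, p < b → b ≤ k → lvl p = mmin → lvl b = mmin → False := by
    intro p b hpb hbk hp hb
    have hex2 : ∃ q, p < q ∧ q ≤ k ∧ lvl q = mmin := ⟨b, hpb, hbk, hb⟩
    set q := Nat.find hex2 with hqdef
    obtain ⟨hpq, hqk, hq⟩ := Nat.find_spec hex2
    have hmid : ∀ t, p < t → t < q → lvl t ≠ mmin := by
      intro t ht1 ht2 hEq
      exact Nat.find_min hex2 ht2 ⟨ht1, by omega, hEq⟩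
    obtain ⟨s, hqs⟩ : ∃ s, q = p + 1 + s := ⟨q - (p+1), by omega⟩
    -- bound on the intermediate sum
    have hS : ∑ t ∈ Finset.range s, M ^ (-(lvl (p+1+t) : ℤ)) ≤
        M ^ (-((mmin + 1 : ℕ) : ℤ)) / (1 - 2 * M⁻¹) := by
      rcases Nat.eq_zero_or_pos s with rfl | hs
      · simp only [Finset.range_zero, Finset.sum_empty]
        positivity
      · obtain ⟨s', rfl⟩ : ∃ s', s = s' + 1 := ⟨s-1, by omega⟩
        refine IH s' (by omega) (fun t => x (p+1+t)) (fun t => lvl (p+1+t)) (mmin+1)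
          (fun j hj => hmem (p+1+j) (by omega))
          (fun i hi j hj hij => hne (p+1+i) (by omega) (p+1+j) (by omega) (by omega))
          (fun j hj => hint (p+1+j) (by omega)) ?_
        intro j hj
        show mmin + 1 ≤ lvl (p+1+j)
        have h1 : mmin ≤ lvl (p+1+j) := hminle _ (by omega)
        have h2 : lvl (p+1+j) ≠ mmin := hmid _ (by omega) (by omega)
        omega
    -- separation of the two min-level centers
    have hxpq : x p ≠ x q := by
      intro hEq
      apply hne p (by omega) q hqk (by omega)
      rw [hp, hq, hEq]
    have hsep' : M ^ (-(mmin : ℤ)) ≤ dist (x p) (x q) := by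
      have h1 := hmem p (by omega)
      have h2 := hmem q hqk
      rw [hp] at h1
      rw [hq] at h2
      exact hsep mmin _ h1 _ h2 hxpq
    -- chain triangle inequality
    have htri : dist (x p) (x q) ≤
        ∑ t ∈ Finset.range (s+1), dist (x (p+t)) (x (p+t+1)) := by
      have h := dist_le_range_sum_dist (fun t => x (p+t)) (s+1)
      simpa [show p + (s+1) = q by omega, add_assoc] using h
    have hterm : ∑ t ∈ Finset.range (s+1), dist (x (p+t)) (x (p+t+1)) ≤
        ∑ t ∈ Finset.range (s+1),
          c * (M ^ (-(lvl (p+t) : ℤ)) + M ^ (-(lvl (p+t+1) : ℤ))) := by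
      refine Finset.sum_le_sum fun t ht => ?_
      have htk : p + t < k := by
        have := Finset.mem_range.mp ht; omega
      exact hdist _ htk
    have hsum1 : ∑ t ∈ Finset.range (s+1), M ^ (-(lvl (p+t) : ℤ)) =
        M ^ (-(lvl p : ℤ)) + ∑ t ∈ Finset.range s, M ^ (-(lvl (p+1+t) : ℤ)) := by
      rw [Finset.sum_range_succ']
      simp only [Nat.add_zero]
      rw [add_comm]
      congr 1
      exact Finset.sum_congr rfl fun t _ => by rw [show p + (t+1) = p+1+t by omega]
    have hsum2 : ∑ t ∈ Finset.range (s+1), M ^ (-(lvl (p+t+1) : ℤ)) =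
        (∑ t ∈ Finset.range s, M ^ (-(lvl (p+1+t) : ℤ))) + M ^ (-(lvl q : ℤ)) := by
      rw [Finset.sum_range_succ]
      congr 1
      · exact Finset.sum_congr rfl fun t _ => by rw [show p + t + 1 = p+1+t by omega]
      · rw [show p + s + 1 = q by omega]
    have hsplit : ∑ t ∈ Finset.range (s+1),
        c * (M ^ (-(lvl (p+t) : ℤ)) + M ^ (-(lvl (p+t+1) : ℤ))) =
        c * (M ^ (-(lvl p : ℤ)) + M ^ (-(lvl q : ℤ))) +
          2 * c * ∑ t ∈ Finset.range s, M ^ (-(lvl (p+1+t) : ℤ)) := by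
      rw [← Finset.mul_sum, Finset.sum_add_distrib, hsum1, hsum2]
      ring
    -- numeric contradiction
    set u := M ^ (-(mmin : ℤ)) with hu
    set S := ∑ t ∈ Finset.range s, M ^ (-(lvl (p+1+t) : ℤ)) with hSdef
    have hS0 : 0 ≤ S := Finset.sum_nonneg fun t _ => (hpow _).le
    have hmain : u ≤ 2 * c * u + 2 * c * S := by
      have := hsep'.trans (htri.trans (hterm.trans_eq hsplit))
      rw [hp, hq] at this
      linarith
    have hS2 : S * (1 - 2 * M⁻¹) ≤ u * M⁻¹ := by
      have := hS
      rw [hfact] at this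
      exact (le_div_iff₀ hDpos).mp this
    have hS3 : S ≤ 2 * (u * M⁻¹) := by nlinarith
    have hupos : 0 < u := hpow mmin
    nlinarith
  -- level bound away from the unique minimum
  have hlb2 : ∀ j ≤ k, j ≠ i0 → mmin + 1 ≤ lvl j := by
    intro j hj hji
    have h1 : mmin ≤ lvl j := hminle j hj
    rcases eq_or_lt_of_le h1 with hEq | h
    · exfalso
      rcases lt_or_gt_of_ne hji with h' | h'
      · exact huniq j i0 h' hi0k hEq.symm hi0.symm
      · exact huniq i0 j h' hj hi0.symm hEq.symm
    · omega
  -- split the sum at i0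
  obtain ⟨r, rfl⟩ : ∃ r, k = i0 + r := ⟨k - i0, by omega⟩
  have hL : ∑ j ∈ Finset.range i0, M ^ (-(lvl j : ℤ)) ≤
      M ^ (-((mmin + 1 : ℕ) : ℤ)) / (1 - 2 * M⁻¹) := by
    rcases Nat.eq_zero_or_pos i0 with h0 | hpos
    · rw [h0]; simp only [Finset.range_zero, Finset.sum_empty]; positivity
    · obtain ⟨i0', rfl⟩ : ∃ i0', i0 = i0' + 1 := ⟨i0 - 1, by omega⟩
      refine IH i0' (by omega) x lvl (mmin+1)
        (fun j hj => hmem j (by omega))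
        (fun i hi j hj hij => hne i (by omega) j (by omega) hij)
        (fun j hj => hint j (by omega))
        (fun j hj => hlb2 j (by omega) (by omega))
  have hR : ∑ j ∈ Finset.range r, M ^ (-(lvl (i0+1+j) : ℤ)) ≤
      M ^ (-((mmin + 1 : ℕ) : ℤ)) / (1 - 2 * M⁻¹) := by
    rcases Nat.eq_zero_or_pos r with h0 | hpos
    · rw [h0]; simp only [Finset.range_zero, Finset.sum_empty]; positivity
    · obtain ⟨r', rfl⟩ : ∃ r', r = r' + 1 := ⟨r - 1, by omega⟩
      refine IH r' (by omega) (fun t => x (i0+1+t)) (fun t => lvl (i0+1+t)) (mmin+1)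
        (fun j hj => hmem (i0+1+j) (by omega))
        (fun i hi j hj hij => hne (i0+1+i) (by omega) (i0+1+j) (by omega) (by omega))
        (fun j hj => hint (i0+1+j) (by omega))
        (fun j hj => hlb2 (i0+1+j) (by omega) (by omega))
  have hsplitsum : ∑ j ∈ Finset.range (i0 + r + 1), M ^ (-(lvl j : ℤ)) =
      (∑ j ∈ Finset.range i0, M ^ (-(lvl j : ℤ))) + M ^ (-(lvl i0 : ℤ)) +
        ∑ j ∈ Finset.range r, M ^ (-(lvl (i0+1+j) : ℤ)) := by
    rw [show i0 + r + 1 = i0 + (r+1) by omega, Finset.sum_range_add]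
    rw [Finset.sum_range_succ']
    simp only [Nat.add_zero]
    rw [add_comm (∑ i ∈ Finset.range r, M ^ (-(lvl (i0 + (i + 1)) : ℤ))) (M ^ (-(lvl i0 : ℤ)))]
    rw [← add_assoc]
    congr 1
    exact Finset.sum_congr rfl fun t _ => by rw [show i0 + (t+1) = i0+1+t by omega]
  rw [hsplitsum, ← hi0]
  have hfinal : M ^ (-(mmin : ℤ)) + 2 * (M ^ (-((mmin + 1 : ℕ) : ℤ)) / (1 - 2 * M⁻¹)) =
      M ^ (-(mmin : ℤ)) / (1 - 2 * M⁻¹) := by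
    rw [hfact, eq_div_iff (ne_of_gt hDpos), add_mul, mul_assoc,
      div_mul_cancel₀ _ (ne_of_gt hDpos)]
    ring
  have hmono : M ^ (-(mmin : ℤ)) ≤ M ^ (-(m : ℤ)) :=
    zpow_le_zpow_right₀ (by linarith) (by omega)
  calc (∑ j ∈ Finset.range i0, M ^ (-(lvl j : ℤ))) + M ^ (-(mmin : ℤ)) +
        ∑ j ∈ Finset.range r, M ^ (-(lvl (i0+1+j) : ℤ))
      ≤ M ^ (-((mmin + 1 : ℕ) : ℤ)) / (1 - 2 * M⁻¹) + M ^ (-(mmin : ℤ)) +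
        M ^ (-((mmin + 1 : ℕ) : ℤ)) / (1 - 2 * M⁻¹) := by
        exact add_le_add (add_le_add hL le_rfl) hR
    _ = M ^ (-(mmin : ℤ)) / (1 - 2 * M⁻¹) := by rw [← hfinal]; ring
    _ ≤ M ^ (-(m : ℤ)) / (1 - 2 * M⁻¹) := div_le_div_of_nonneg_right hmono hDpos.le


/-- **Lemma (chains of balls).** Let `M > 4`, `0 < c < 1/4`, and let `(X_n)` be nested maximal
`M^{-n}`-nets in a compact `X ⊆ ℓ^∞`. If `B_0,…,B_k ∈ 𝓑 = {B(x, M^{-n}) : x ∈ X_n, n ≥ 0}`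
are pairwise distinct balls with `cB_j ∩ cB_{j+1} ≠ ∅` for all `j < k`, then
`Σ_j diam(cB_j) ≤ (1/(1 − 2M⁻¹))·max_j diam(cB_j)`. -/
theorem chain_of_balls_diam_sum :
    ∀ M c : ℝ, 4 < M → 0 < c → c < 1 / 4 →
      ∀ X : Set lInf, IsCompact X →
        ∀ Xn : ℕ → Set lInf,
          (∀ n, Xn n ⊆ X) →
          (∀ n, Xn n ⊆ Xn (n + 1)) →
          (∀ n, ∀ x ∈ Xn n, ∀ y ∈ Xn n, x ≠ y → M ^ (-(n : ℤ)) ≤ dist x y) →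
          (∀ n, ∀ x ∈ X, ∃ y ∈ Xn n, dist x y ≤ M ^ (-(n : ℤ))) →
          ∀ (k : ℕ) (x : ℕ → lInf) (lvl : ℕ → ℕ),
            (∀ j ≤ k, x j ∈ Xn (lvl j)) →
            (∀ i ≤ k, ∀ j ≤ k, i ≠ j →
              Metric.ball (x i) (M ^ (-(lvl i : ℤ))) ≠ Metric.ball (x j) (M ^ (-(lvl j : ℤ)))) →
            (∀ j < k, (Metric.ball (x j) (c * M ^ (-(lvl j : ℤ))) ∩
                Metric.ball (x (j + 1)) (c * M ^ (-(lvl (j + 1) : ℤ)))).Nonempty) →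
            ∑ j ∈ Finset.range (k + 1),
                Metric.diam (Metric.ball (x j) (c * M ^ (-(lvl j : ℤ)))) ≤
              (1 / (1 - 2 * M⁻¹)) *
                (Finset.range (k + 1)).sup' Finset.nonempty_range_add_one
                  (fun j => Metric.diam (Metric.ball (x j) (c * M ^ (-(lvl j : ℤ))))) := by
  intro M c hM hc hc4 X hX Xn hsub hnest hsep hnet k x lvl hmem hne hint
  have hM0 : (0:ℝ) < M := by linarith
  have hMipos : (0:ℝ) < M⁻¹ := by positivity
  have hMi : M⁻¹ < 1/4 := by
    rw [inv_lt_comm₀ hM0 (by norm_num)]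
    linarith
  have hDpos : (0:ℝ) < 1 - 2 * M⁻¹ := by linarith
  have hpow : ∀ n : ℕ, (0:ℝ) < M ^ (-(n : ℤ)) := fun n => zpow_pos hM0 _
  have hdiam : ∀ j : ℕ, Metric.diam (Metric.ball (x j) (c * M ^ (-(lvl j : ℤ)))) =
      2 * (c * M ^ (-(lvl j : ℤ))) := fun j =>
    diam_ball_lInf (x j) (by positivity)
  obtain ⟨i0, hi0mem, hi0⟩ := Finset.exists_mem_eq_inf' (Finset.nonempty_range_add_one (n := k)) lvl
  set mmin := (Finset.range (k+1)).inf' Finset.nonempty_range_add_one lvl with hmmin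
  have hminle : ∀ j ≤ k, mmin ≤ lvl j := fun j hj =>
    Finset.inf'_le lvl (Finset.mem_range.mpr (Nat.lt_succ_of_le hj))
  have hkey := key_chain M c hM hc hc4 Xn hsep k x lvl mmin hmem hne hint hminle
  have hsup : 2 * (c * M ^ (-(mmin : ℤ))) ≤
      (Finset.range (k + 1)).sup' Finset.nonempty_range_add_one
        (fun j => Metric.diam (Metric.ball (x j) (c * M ^ (-(lvl j : ℤ))))) := by
    have := Finset.le_sup'
      (fun j => Metric.diam (Metric.ball (x j) (c * M ^ (-(lvl j : ℤ))))) hi0mem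
    rwa [hdiam i0, ← hi0] at this
  calc ∑ j ∈ Finset.range (k + 1),
        Metric.diam (Metric.ball (x j) (c * M ^ (-(lvl j : ℤ))))
      = 2 * c * ∑ j ∈ Finset.range (k + 1), M ^ (-(lvl j : ℤ)) := by
        rw [Finset.mul_sum]
        exact Finset.sum_congr rfl fun j _ => by rw [hdiam j]; ring
    _ ≤ 2 * c * (M ^ (-(mmin : ℤ)) / (1 - 2 * M⁻¹)) := by
        apply mul_le_mul_of_nonneg_left hkey (by positivity)
    _ = (1 / (1 - 2 * M⁻¹)) * (2 * (c * M ^ (-(mmin : ℤ)))) := by ring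
    _ ≤ (1 / (1 - 2 * M⁻¹)) *
          (Finset.range (k + 1)).sup' Finset.nonempty_range_add_one
            (fun j => Metric.diam (Metric.ball (x j) (c * M ^ (-(lvl j : ℤ))))) := by
        apply mul_le_mul_of_nonneg_left hsup (by positivity)

end
end

section
/- Let Γ be a metric space and μ a doubling Borel measure on Γ, i.e., there is C ≥ 1 with 0 < μ(B(x,2r)) ≤ C·μ(B(x,r)) < ∞ for all x ∈ Γ and r > 0. Let E ⊆ Γ be a Borel set that is porous: there is α ∈ (0,1) such that for every x ∈ E and every ρ > 0 there exist r ∈ (0,ρ) and y ∈ Γ with d(x,y) < r and B(y, αr) ∩ E = ∅. Then μ(E) = 0. -/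
open Metric Set MeasureTheory
open scoped ENNReal NNReal

noncomputable section

/-- **Lemma.** A porous subset of a metric space carrying a doubling Borel measure has measure
zero. -/
theorem porous_of_doubling_measure_zero :
    ∀ (Γ : Type*) [MetricSpace Γ] [MeasurableSpace Γ] [BorelSpace Γ],
      ∀ μ : Measure Γ,
        (∃ C : ℝ, 1 ≤ C ∧ ∀ (x : Γ) (r : ℝ), 0 < r →
          0 < μ (Metric.ball x (2 * r)) ∧
          μ (Metric.ball x (2 * r)) ≤ ENNReal.ofReal C * μ (Metric.ball x r) ∧
          ENNReal.ofReal C * μ (Metric.ball x r) < ⊤) →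
        ∀ E : Set Γ, MeasurableSet E →
          (∃ α : ℝ, 0 < α ∧ α < 1 ∧
            ∀ x ∈ E, ∀ ρ : ℝ, 0 < ρ →
              ∃ r : ℝ, 0 < r ∧ r < ρ ∧
                ∃ y : Γ, dist x y < r ∧ Metric.ball y (α * r) ∩ E = ∅) →
          μ E = 0 := by
  intro Γ _ _ _ μ hdoub E hE hporo
  obtain ⟨C, hC1, hC⟩ := hdoub
  obtain ⟨α, hα0, hα1, hpor⟩ := hporo
  have hCo1 : (1 : ℝ≥0∞) ≤ ENNReal.ofReal C := by
    rw [show (1:ℝ≥0∞) = ENNReal.ofReal 1 by simp]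
    exact ENNReal.ofReal_le_ofReal hC1
  have keyPos : ∀ (x : Γ) (r : ℝ), 0 < r → 0 < μ (ball x r) := by
    intro x r hr
    have h := (hC x (r/2) (by linarith)).1
    rwa [show (2:ℝ) * (r/2) = r by ring] at h
  have keyFin : ∀ (x : Γ) (r : ℝ), μ (ball x r) < ⊤ := by
    intro x r
    rcases le_or_gt r 0 with h | h
    · simp [ball_eq_empty.2 h]
    · calc μ (ball x r) ≤ ENNReal.ofReal C * μ (ball x r) :=
            le_mul_of_one_le_left (by positivity) hCo1
        _ < ⊤ := (hC x r h).2.2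
  have doub : ∀ (x : Γ) (r : ℝ), 0 < r →
      μ (ball x (2 * r)) ≤ ENNReal.ofReal C * μ (ball x r) := fun x r hr => (hC x r hr).2.1
  have iter : ∀ (n : ℕ) (x : Γ) (r : ℝ), 0 < r →
      μ (ball x (2 ^ n * r)) ≤ (ENNReal.ofReal C) ^ n * μ (ball x r) := by
    intro n
    induction n with
    | zero => intro x r _; simp
    | succ n ih =>
      intro x r hr
      rw [show (2:ℝ) ^ (n+1) * r = 2 ^ n * (2 * r) by ring]
      calc μ (ball x (2 ^ n * (2 * r)))
          ≤ (ENNReal.ofReal C) ^ n * μ (ball x (2 * r)) := ih x (2*r) (by linarith)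
        _ ≤ (ENNReal.ofReal C) ^ n * (ENNReal.ofReal C * μ (ball x r)) :=
            mul_le_mul_right (doub x r hr) _
        _ = (ENNReal.ofReal C) ^ (n+1) * μ (ball x r) := by ring
  -- the space is empty or we pick a basepoint
  rcases isEmpty_or_nonempty Γ with hΓ | hΓ
  · simp [Set.eq_empty_of_isEmpty E]
  obtain ⟨x₀⟩ := hΓ
  -- balls are totally bounded
  have tb : ∀ R : ℝ, 0 < R → TotallyBounded (ball x₀ R) := by
    intro R hR
    rw [Metric.totallyBounded_iff]
    by_contra hcon
    push_neg at hcon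
    obtain ⟨ε, hε, hcon⟩ := hcon
    haveI : Std.Symm (fun a b : Γ => ε ≤ dist a b) :=
      ⟨fun a b h => by rwa [dist_comm]⟩
    obtain ⟨f, hfP, hfsep⟩ := exists_seq_of_forall_finset_exists'
      (fun y : Γ => y ∈ ball x₀ R) (fun a b => ε ≤ dist a b) (by
        intro s hs
        have h2 := hcon (↑s) s.finite_toSet
        rw [Set.not_subset] at h2
        obtain ⟨z, hz1, hz2⟩ := h2
        refine ⟨z, hz1, fun w hw => ?_⟩
        by_contra hlt
        exact hz2 (Set.mem_biUnion hw (mem_ball.2 (by rw [dist_comm]; exact not_le.1 hlt))))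
    -- pick k with 2R ≤ 2^k * (ε/2)
    obtain ⟨k, hk⟩ := pow_unbounded_of_one_lt (4 * R / ε) (y := (2:ℝ)) one_lt_two
    have hk' : 2 * R ≤ 2 ^ k * (ε / 2) := by
      rw [div_lt_iff₀ hε] at hk
      nlinarith
    have hsub : ∀ i : ℕ, ball x₀ R ⊆ ball (f i) (2 ^ k * (ε / 2)) := by
      intro i z hz
      have h1 : dist z (f i) < 2 * R := by
        have := hfP i
        rw [mem_ball] at this hz
        calc dist z (f i) ≤ dist z x₀ + dist x₀ (f i) := dist_triangle _ _ _
          _ < R + R := by rw [dist_comm x₀ (f i)]; linarith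
          _ = 2 * R := by ring
      exact mem_ball.2 (lt_of_lt_of_le h1 hk')
    have hlow : ∀ i : ℕ, μ (ball x₀ R) ≤ (ENNReal.ofReal C) ^ k * μ (ball (f i) (ε/2)) :=
      fun i => (measure_mono (hsub i)).trans (iter k (f i) (ε/2) (by linarith))
    have hdisj : ∀ i j : ℕ, i ≠ j → Disjoint (ball (f i) (ε/2)) (ball (f j) (ε/2)) := by
      intro i j hij
      apply Set.disjoint_left.2
      intro z hzi hzj
      rw [mem_ball] at hzi hzj
      have := hfsep hij
      have h3 : dist (f i) (f j) ≤ dist (f i) z + dist z (f j) := dist_triangle _ _ _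
      rw [dist_comm (f i) z] at h3
      simp only [Function.onFun] at this
      linarith
    have hsum : ∀ n : ℕ, (n : ℝ≥0∞) * μ (ball x₀ R) ≤
        (ENNReal.ofReal C) ^ k * μ (ball x₀ (R + ε/2)) := by
      intro n
      have hmeq : μ (⋃ i ∈ Finset.range n, ball (f i) (ε/2)) =
          ∑ i ∈ Finset.range n, μ (ball (f i) (ε/2)) :=
        measure_biUnion_finset
          (fun i _ j _ hij => hdisj i j hij) (fun i _ => measurableSet_ball)
      have hle : (⋃ i ∈ Finset.range n, ball (f i) (ε/2)) ⊆ ball x₀ (R + ε/2) := by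
        intro z hz
        simp only [Set.mem_iUnion] at hz
        obtain ⟨i, _, hzi⟩ := hz
        rw [mem_ball] at hzi ⊢
        have := mem_ball.1 (hfP i)
        calc dist z x₀ ≤ dist z (f i) + dist (f i) x₀ := dist_triangle _ _ _
          _ < ε/2 + R := by linarith
          _ = R + ε/2 := by ring
      calc (n : ℝ≥0∞) * μ (ball x₀ R)
          = ∑ _i ∈ Finset.range n, μ (ball x₀ R) := by
            simp [Finset.sum_const, nsmul_eq_mul]
        _ ≤ ∑ i ∈ Finset.range n, (ENNReal.ofReal C) ^ k * μ (ball (f i) (ε/2)) :=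
            Finset.sum_le_sum fun i _ => hlow i
        _ = (ENNReal.ofReal C) ^ k * ∑ i ∈ Finset.range n, μ (ball (f i) (ε/2)) := by
            rw [Finset.mul_sum]
        _ = (ENNReal.ofReal C) ^ k * μ (⋃ i ∈ Finset.range n, ball (f i) (ε/2)) := by
            rw [hmeq]
        _ ≤ (ENNReal.ofReal C) ^ k * μ (ball x₀ (R + ε/2)) :=
            mul_le_mul_right (measure_mono hle) _
    -- contradiction
    set a : ℝ≥0∞ := μ (ball x₀ R) with ha
    set b : ℝ≥0∞ := (ENNReal.ofReal C) ^ k * μ (ball x₀ (R + ε/2)) with hb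
    have ha0 : a ≠ 0 := (keyPos x₀ R hR).ne'
    have hbt : b ≠ ⊤ := by
      apply ENNReal.mul_ne_top
      · exact ENNReal.pow_ne_top ENNReal.ofReal_ne_top
      · exact (keyFin x₀ (R + ε/2)).ne
    have hdivt : b / a ≠ ⊤ := (ENNReal.div_lt_top hbt ha0).ne
    obtain ⟨n, hn⟩ := ENNReal.exists_nat_gt hdivt
    have : (n : ℝ≥0∞) ≤ b / a := (ENNReal.le_div_iff_mul_le (Or.inl ha0)
      (Or.inr hbt)).2 (hsum n)
    exact absurd hn (not_lt.2 this)
  -- separability / second countability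
  haveI : TopologicalSpace.SeparableSpace Γ := by
    rw [← TopologicalSpace.isSeparable_univ_iff]
    have huniv : (univ : Set Γ) = ⋃ n : ℕ, ball x₀ (n + 1) := by
      ext z
      simp only [Set.mem_univ, Set.mem_iUnion, mem_ball, true_iff]
      obtain ⟨n, hn⟩ := exists_nat_gt (dist z x₀)
      exact ⟨n, by linarith⟩
    rw [huniv]
    exact TopologicalSpace.IsSeparable.iUnion fun n =>
      (tb (n + 1) (by positivity)).isSeparable
  haveI : SecondCountableTopology Γ := UniformSpace.secondCountable_of_separable Γ
  haveI : IsLocallyFiniteMeasure μ :=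
    ⟨fun x => ⟨ball x 1, ball_mem_nhds x one_pos, keyFin x 1⟩⟩
  haveI : IsUnifLocDoublingMeasure μ := by
    constructor
    refine ⟨C.toNNReal * C.toNNReal, ?_⟩
    filter_upwards [self_mem_nhdsWithin] with ε hεm
    have hε : 0 < ε := hεm
    intro x
    have hcoe : ((C.toNNReal * C.toNNReal : ℝ≥0) : ℝ≥0∞) =
        ENNReal.ofReal C * ENNReal.ofReal C := by
      rw [ENNReal.coe_mul]; rfl
    calc μ (closedBall x (2 * ε)) ≤ μ (ball x (2 * (2 * ε))) :=
          measure_mono (closedBall_subset_ball (by linarith))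
      _ ≤ ENNReal.ofReal C * μ (ball x (2 * ε)) := doub x (2 * ε) (by linarith)
      _ ≤ ENNReal.ofReal C * (ENNReal.ofReal C * μ (ball x ε)) :=
          mul_le_mul_right (doub x ε hε) _
      _ ≤ ENNReal.ofReal C * (ENNReal.ofReal C * μ (closedBall x ε)) := by
          gcongr
          exact ball_subset_closedBall
      _ = ((C.toNNReal * C.toNNReal : ℝ≥0) : ℝ≥0∞) * μ (closedBall x ε) := by
          rw [hcoe, mul_assoc]
  -- Lebesgue density theorem
  have hae := IsUnifLocDoublingMeasure.ae_tendsto_measure_inter_div μ E (2 / α)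
  have h2 : ∀ᵐ x ∂μ.restrict E, False := by
    filter_upwards [hae, ae_restrict_mem hE] with x hx hxE
    choose r hr0 hrlt y hxy hhole using fun n : ℕ => hpor x hxE (1 / (n + 1)) (by positivity)
    set δ : ℕ → ℝ := fun n => α * r n / 2 with hδdef
    have hδ0 : ∀ n, 0 < δ n := fun n => by
      have := hr0 n
      simp only [hδdef]
      positivity
    have hδlim : Filter.Tendsto δ Filter.atTop (nhdsWithin 0 (Set.Ioi 0)) := by
      apply tendsto_nhdsWithin_of_tendsto_nhds_of_eventually_within
      · apply squeeze_zero (fun n => (hδ0 n).le)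
          (g := fun n : ℕ => α / 2 * (1 / (n + 1)))
        · intro n
          have h1 := hrlt n
          have h2 := hr0 n
          simp only [hδdef]
          nlinarith
        · have := tendsto_one_div_add_atTop_nhds_zero_nat.const_mul (α / 2)
          simpa using this
      · exact Filter.Eventually.of_forall fun n => hδ0 n
    have hmem : ∀ n, x ∈ closedBall (y n) (2 / α * δ n) := by
      intro n
      rw [mem_closedBall]
      have heq : 2 / α * δ n = r n := by
        simp only [hδdef]
        field_simp
      rw [heq]
      exact (hxy n).le
    have hT := hx (ι := ℕ) (l := Filter.atTop) y δ hδlim (Filter.Eventually.of_forall hmem)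
    have hzero : ∀ n, μ (E ∩ closedBall (y n) (δ n)) = 0 := by
      intro n
      have hsub2 : E ∩ closedBall (y n) (δ n) ⊆ ball (y n) (α * r n) ∩ E := by
        intro z hz
        refine ⟨?_, hz.1⟩
        have hz2 := mem_closedBall.1 hz.2
        rw [mem_ball]
        have := hr0 n
        have hδlt : δ n < α * r n := by simp only [hδdef]; nlinarith
        linarith
      exact measure_mono_null hsub2 (by rw [hhole n]; exact measure_empty)
    have hT0 : Filter.Tendsto (fun _ : ℕ => (0 : ℝ≥0∞)) Filter.atTop (nhds 1) := by
      have : (fun n => μ (E ∩ closedBall (y n) (δ n)) / μ (closedBall (y n) (δ n))) =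
          fun _ : ℕ => (0 : ℝ≥0∞) := by
        funext n
        rw [hzero n, ENNReal.zero_div]
      rwa [this] at hT
    have h01 : (0 : ℝ≥0∞) = 1 := tendsto_nhds_unique tendsto_const_nhds hT0
    exact zero_ne_one h01
  by_contra hne
  have hNB : (ae (μ.restrict E)).NeBot :=
    MeasureTheory.ae_neBot.2 (by rwa [Ne, Measure.restrict_eq_zero])
  exact hNB.ne (Filter.eventually_false_iff_eq_bot.mp h2)
end
end

section
/- Let H be a real Hilbert space and s : [0,1] → H a continuous curve of finite length ℓ(s) with s(0) ≠ s(1), and let L be the affine line through s(0) and s(1). Then for every t ∈ [0,1]: dist(s(t), L)² ≤ ℓ(s)·(ℓ(s) − ‖s(0)−s(1)‖)/2. -/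
open Metric Set MeasureTheory

noncomputable section

private lemma key_real (a b c x d l : ℝ) (ha : 0 ≤ a) (hb : 0 ≤ b) (hd : 0 ≤ d)
    (h1 : d ^ 2 ≤ a ^ 2 - x ^ 2) (h2 : b ^ 2 = a ^ 2 - 2 * c * x + c ^ 2)
    (h3 : a + b ≤ l) (h4 : c ≤ l) (hc : 0 ≤ c) : d ^ 2 ≤ l * (l - c) / 2 := by
  have hx : x ^ 2 + d ^ 2 ≤ a ^ 2 := by linarith
  have hbb : (c - x) ^ 2 + d ^ 2 ≤ b ^ 2 := by nlinarith
  have h5 : (x ^ 2 + d ^ 2) * ((c - x) ^ 2 + d ^ 2) ≤ a ^ 2 * b ^ 2 :=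
    mul_le_mul hx hbb (by positivity) (sq_nonneg a)
  have hab : x * (c - x) + d ^ 2 ≤ a * b := by
    nlinarith [h5, sq_nonneg (d * (2 * x - c)), mul_nonneg ha hb,
      sq_nonneg (a * b + x * (c - x) + d ^ 2)]
  have h6 : c ^ 2 + 4 * d ^ 2 ≤ (a + b) ^ 2 := by nlinarith
  nlinarith [sq_nonneg (a + b), add_nonneg ha hb]

/-- **Lemma (Pythagorean estimate).** If `s : [0,1] → H` is a continuous curve of finite
length `ℓ(s)` in a real Hilbert space with `s 0 ≠ s 1`, and `L` is the affine line through
`s 0` and `s 1`, then `dist(s t, L)² ≤ ℓ(s)·(ℓ(s) − ‖s 0 − s 1‖)/2` for every `t ∈ [0,1]`. -/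
theorem dist_to_chord_sq_le :
    ∀ (H : Type*) [NormedAddCommGroup H] [InnerProductSpace ℝ H],
      ∀ s : ℝ → H, ContinuousOn s (Set.Icc 0 1) →
        eVariationOn s (Set.Icc 0 1) ≠ ⊤ → s 0 ≠ s 1 →
        ∀ t ∈ Set.Icc (0 : ℝ) 1,
          Metric.infDist (s t) {y | ∃ u : ℝ, y = s 0 + u • (s 1 - s 0)} ^ 2 ≤
            (eVariationOn s (Set.Icc 0 1)).toReal *
              ((eVariationOn s (Set.Icc 0 1)).toReal - dist (s 0) (s 1)) / 2 := by
  intro H _ _ s _hcont hfin hne t ht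
  set L : Set H := {y | ∃ u : ℝ, y = s 0 + u • (s 1 - s 0)} with hL
  set ℓ : ℝ := (eVariationOn s (Set.Icc 0 1)).toReal with hℓ
  set A : H := s 0
  set B : H := s 1
  set p : H := s t
  set v : H := p - A with hv
  set w : H := B - A with hw
  have hwne : w ≠ 0 := sub_ne_zero.mpr (Ne.symm hne)
  have hwpos : (0:ℝ) < ‖w‖ := norm_pos_iff.mpr hwne
  set c : ℝ := ‖w‖ with hc
  -- variation splitting
  have hsplit := eVariationOn.Icc_add_Icc s (s := Set.Icc (0:ℝ) 1) ht.1 ht.2 ht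
  have hi1 : Set.Icc (0:ℝ) 1 ∩ Set.Icc 0 t = Set.Icc 0 t := by
    rw [Set.Icc_inter_Icc]; simp [ht.2]
  have hi2 : Set.Icc (0:ℝ) 1 ∩ Set.Icc t 1 = Set.Icc t 1 := by
    rw [Set.Icc_inter_Icc]; simp [ht.1]
  have hi3 : Set.Icc (0:ℝ) 1 ∩ Set.Icc 0 1 = Set.Icc 0 1 := Set.inter_self _
  rw [hi1, hi2, hi3] at hsplit
  have he1 : edist (s 0) (s t) ≤ eVariationOn s (Set.Icc 0 t) :=
    eVariationOn.edist_le s (Set.mem_Icc.mpr ⟨le_refl 0, ht.1⟩)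
      (Set.mem_Icc.mpr ⟨ht.1, le_refl t⟩)
  have he2 : edist (s t) (s 1) ≤ eVariationOn s (Set.Icc t 1) :=
    eVariationOn.edist_le s (Set.mem_Icc.mpr ⟨le_refl t, ht.2⟩)
      (Set.mem_Icc.mpr ⟨ht.2, le_refl 1⟩)
  have hsum : edist (s 0) (s t) + edist (s t) (s 1) ≤ eVariationOn s (Set.Icc 0 1) := by
    rw [← hsplit]; exact add_le_add he1 he2
  have hαβ : dist p A + dist p B ≤ ℓ := by
    have h1 : dist p A + dist p B = (edist (s 0) (s t) + edist (s t) (s 1)).toReal := by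
      rw [ENNReal.toReal_add (edist_ne_top _ _) (edist_ne_top _ _)]
      rw [dist_edist, dist_edist, edist_comm (s 0) (s t)]
    rw [h1, hℓ]
    exact ENNReal.toReal_mono hfin hsum
  have hcl : c ≤ ℓ := by
    have h0 : edist (s 0) (s 1) ≤ eVariationOn s (Set.Icc 0 1) :=
      eVariationOn.edist_le s (Set.mem_Icc.mpr ⟨le_refl 0, zero_le_one⟩)
        (Set.mem_Icc.mpr ⟨zero_le_one, le_refl 1⟩)
    have : dist A B ≤ ℓ := by
      rw [dist_edist]; exact ENNReal.toReal_mono hfin h0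
    calc c = dist A B := by rw [hc, hw, dist_eq_norm, norm_sub_rev]
    _ ≤ ℓ := this
  -- projection point
  set I : ℝ := inner ℝ v w with hI
  set q : H := A + (I / c ^ 2) • w with hq
  have hqL : q ∈ L := ⟨I / c ^ 2, rfl⟩
  have hdq : Metric.infDist p L ≤ ‖v - (I / c ^ 2) • w‖ := by
    have := Metric.infDist_le_dist_of_mem (x := p) hqL
    rwa [dist_eq_norm, hq, show p - (A + (I / c ^ 2) • w) = v - (I / c ^ 2) • w by
      rw [hv]; abel] at this
  have hq2 : ‖v - (I / c ^ 2) • w‖ ^ 2 = ‖v‖ ^ 2 - (I / c) ^ 2 := by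
    rw [norm_sub_sq_real, real_inner_smul_right, norm_smul, Real.norm_eq_abs,
      mul_pow, sq_abs, ← hI, ← hc]
    field_simp
    ring
  have hβ2 : (dist p B) ^ 2 = (dist p A) ^ 2 - 2 * c * (I / c) + c ^ 2 := by
    have h1 : dist p B = ‖v - w‖ := by
      rw [dist_eq_norm, hv, hw]; congr 1; abel
    have h2 : dist p A = ‖v‖ := by rw [dist_eq_norm]
    rw [h1, h2, norm_sub_sq_real, ← hI, ← hc]
    field_simp
  have hd2 : Metric.infDist p L ^ 2 ≤ (dist p A) ^ 2 - (I / c) ^ 2 := by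
    have h2 : dist p A = ‖v‖ := by rw [dist_eq_norm]
    rw [h2, ← hq2]
    exact pow_le_pow_left₀ Metric.infDist_nonneg hdq 2
  have hd2' : Metric.infDist p L ^ 2 ≤ (dist p A) ^ 2 - (I / c) ^ 2 := hd2
  have := key_real (dist p A) (dist p B) c (I / c) (Metric.infDist p L) ℓ
    dist_nonneg dist_nonneg Metric.infDist_nonneg hd2' hβ2 hαβ hcl (le_of_lt hwpos)
  calc Metric.infDist p L ^ 2 ≤ ℓ * (ℓ - c) / 2 := this
  _ = ℓ * (ℓ - dist (s 0) (s 1)) / 2 := by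
      rw [hc, hw, show ‖B - A‖ = dist (s 0) (s 1) by rw [dist_eq_norm, norm_sub_rev]]
end
end
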